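/- arXiv:1610.06304 — 4 statements merged into one kernel-verified Lean document; each statement's English description precedes it below -/
import Mathlib

section
/- Suppose in addition that there is N₀ with |U_{n+1}| > |U_n| > 0 for all n ≥ N₀. Then there exist constants C₅ ≥ C₆ > 0 and an integer N ≥ N₀ such that for all integers n, n₁ with n ≥ N and N₀ ≤ n₁ < n one has C₆ · n^σ · |α|^n ≤ |U_n − U_{n₁}| ≤ C₅ · n^σ · |α|^n. -/
open Polynomial

/-- A linear recurrence sequence defined over the integers, together with the data of the
distinct roots of its characteristic polynomial and the polynomial coefficients in its
Binet-type representation `U n = ∑ i, aᵢ(n) · αᵢⁿ`. By convention the root with index `0`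
is the distinguished (dominant) one. -/
structure LinRecSeq where
  /-- the integer sequence -/
  U : ℕ → ℤ
  /-- the order of the recurrence -/
  k : ℕ
  kpos : 0 < k
  /-- the integer coefficients of the recurrence: `c i` stands for `c_{i+1}` -/
  c : Fin k → ℤ
  clast : c ⟨k - 1, by omega⟩ ≠ 0
  recur : ∀ n : ℕ, U (n + k) = ∑ i : Fin k, c i * U (n + (k - 1 - i.val))
  /-- the number of distinct roots of the characteristic polynomial -/
  t : ℕ
  tpos : 0 < t
  /-- the distinct complex roots of the characteristic polynomial -/
  root : Fin t → ℂ
  root_inj : Function.Injective root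
  /-- the multiplicities of the roots -/
  m : Fin t → ℕ
  mpos : ∀ i, 0 < m i
  char_eq : (X : ℂ[X]) ^ k - ∑ i : Fin k, C (c i : ℂ) * X ^ (k - 1 - i.val)
      = ∏ i : Fin t, (X - C (root i)) ^ m i
  /-- the polynomial coefficients `aᵢ` (nonzero, of degree `≤ σᵢ - 1`, with algebraic
  coefficients) -/
  a : Fin t → ℂ[X]
  a_ne : ∀ i, a i ≠ 0
  a_deg : ∀ i, (a i).natDegree ≤ m i - 1
  a_alg : ∀ i j, IsAlgebraic ℚ ((a i).coeff j)
  formula : ∀ n : ℕ, (U n : ℂ) = ∑ i : Fin t, (a i).eval (n : ℂ) * root i ^ n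

namespace LinRecSeq

variable (R : LinRecSeq)

/-- the distinguished index of the dominant root -/
def i0 : Fin R.t := ⟨0, R.tpos⟩

/-- `R` has dominant root `z` if `z` is the distinguished root and all other roots are
strictly smaller in absolute value. -/
def HasDomRoot (z : ℂ) : Prop :=
  R.root R.i0 = z ∧ ∀ i, i ≠ R.i0 → ‖R.root i‖ < ‖z‖

/-- the polynomial coefficient of the dominant root (denoted `a(n)` resp. `b(m)`) -/
noncomputable def domPoly : ℂ[X] := R.a R.i0

/-- the degree of the polynomial coefficient of the dominant root
(denoted `σ` resp. `τ`) -/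
noncomputable def domDeg : ℕ := R.domPoly.natDegree

end LinRecSeq

/-- Two nonzero complex numbers are multiplicatively independent if the only integers
`a, b` with `αᵃ βᵇ = 1` are `a = b = 0`. -/
def MultIndep (α β : ℂ) : Prop := ∀ a b : ℤ, α ^ a * β ^ b = 1 → a = 0 ∧ b = 0

open Filter Finset

lemma aux_poly_mul_geom (P : ℂ[X]) {z : ℂ} (hz : ‖z‖ < 1) :
    Tendsto (fun n : ℕ => P.eval (n : ℂ) * z ^ n) atTop (nhds 0) := by
  have heq : ∀ n : ℕ, P.eval (n : ℂ) * z ^ n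
      = ∑ j ∈ range (P.natDegree + 1), P.coeff j * ((n : ℂ) ^ j * z ^ n) := by
    intro n
    rw [Polynomial.eval_eq_sum_range, Finset.sum_mul]
    simp [mul_assoc]
  simp_rw [heq]
  have h : Tendsto (fun n : ℕ => ∑ j ∈ range (P.natDegree + 1),
      P.coeff j * ((n : ℂ) ^ j * z ^ n)) atTop
      (nhds (∑ j ∈ range (P.natDegree + 1), P.coeff j * 0)) := by
    refine tendsto_finset_sum _ fun j _ => ?_
    exact ((summable_pow_mul_geometric_of_norm_lt_one j hz).tendsto_atTop_zero).const_mul _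
  simpa using h

lemma aux_inv_pow_tendsto (m : ℕ) (hm : 0 < m) :
    Tendsto (fun n : ℕ => ((n : ℂ) ^ m)⁻¹) atTop (nhds 0) := by
  have hr : Tendsto (fun n : ℕ => ((n : ℝ) ^ m)⁻¹) atTop (nhds 0) :=
    ((tendsto_pow_atTop hm.ne').comp tendsto_natCast_atTop_atTop).inv_tendsto_atTop
  rw [tendsto_zero_iff_norm_tendsto_zero]
  refine hr.congr fun n => ?_
  simp [norm_inv, norm_pow]

lemma aux_poly_div (P : ℂ[X]) :
    Tendsto (fun n : ℕ => P.eval (n : ℂ) / (n : ℂ) ^ P.natDegree) atTop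
      (nhds P.leadingCoeff) := by
  set d := P.natDegree with hd
  have heq : ∀ᶠ n : ℕ in atTop, P.eval (n : ℂ) / (n : ℂ) ^ d
      = ∑ j ∈ range (d + 1), P.coeff j * ((n : ℂ) ^ j / (n : ℂ) ^ d) := by
    filter_upwards [eventually_ge_atTop 1] with n hn
    rw [Polynomial.eval_eq_sum_range, Finset.sum_div]
    exact Finset.sum_congr rfl fun j _ => by rw [mul_div_assoc]
  have hsum : Tendsto (fun n : ℕ => ∑ j ∈ range (d + 1),
      P.coeff j * ((n : ℂ) ^ j / (n : ℂ) ^ d)) atTop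
      (nhds (∑ j ∈ range (d + 1), if j = d then P.leadingCoeff else 0)) := by
    refine tendsto_finset_sum _ fun j hj => ?_
    rcases eq_or_lt_of_le (Nat.lt_succ_iff.mp (Finset.mem_range.mp hj)) with h | h
    · rw [if_pos h]
      have : ∀ᶠ n : ℕ in atTop, P.leadingCoeff = P.coeff j * ((n : ℂ) ^ j / (n : ℂ) ^ d) := by
        filter_upwards [eventually_ge_atTop 1] with n hn
        have hne : (n : ℂ) ≠ 0 := Nat.cast_ne_zero.mpr (by omega)
        rw [h, div_self (pow_ne_zero _ hne), mul_one]
        rfl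
      exact tendsto_const_nhds.congr' this
    · simp only [if_neg h.ne]
      have : ∀ᶠ n : ℕ in atTop,
          P.coeff j * (((n : ℂ) ^ (d - j))⁻¹) = P.coeff j * ((n : ℂ) ^ j / (n : ℂ) ^ d) := by
        filter_upwards [eventually_ge_atTop 1] with n hn
        have hne : (n : ℂ) ≠ 0 := Nat.cast_ne_zero.mpr (by omega)
        congr 1
        have hdd : (n : ℂ) ^ d = (n : ℂ) ^ j * (n : ℂ) ^ (d - j) := by
          rw [← pow_add]; congr 1; omega
        rw [hdd, div_mul_eq_div_div, div_self (pow_ne_zero _ hne), one_div]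
      have h0 : Tendsto (fun n : ℕ => P.coeff j * (((n : ℂ) ^ (d - j))⁻¹)) atTop (nhds 0) := by
        simpa using (aux_inv_pow_tendsto (d - j) (by omega)).const_mul (P.coeff j)
      exact h0.congr' this
  have : (∑ j ∈ range (d + 1), if j = d then P.leadingCoeff else 0) = P.leadingCoeff := by
    rw [Finset.sum_ite_eq' (range (d + 1)) d fun _ => P.leadingCoeff]
    simp
  rw [this] at hsum
  exact hsum.congr' (Filter.EventuallyEq.symm heq)

open Filter Finset in
private lemma abs_U_mono (R : LinRecSeq) (N₀ : ℕ)
    (hmono : ∀ n : ℕ, N₀ ≤ n → 0 < |R.U n| ∧ |R.U n| < |R.U (n + 1)|) :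
    ∀ a b : ℕ, N₀ ≤ a → a ≤ b → |R.U a| ≤ |R.U b| := by
  intro a b ha hab
  induction b, hab using Nat.le_induction with
  | base => exact le_refl _
  | succ n hn ih => exact ih.trans (le_of_lt (hmono n (ha.trans hn)).2)

/-- **Growth of differences.** Suppose in addition there is `N₀` with
`|U (n+1)| > |U n| > 0` for all `n ≥ N₀`. Then there are constants `C₅ ≥ C₆ > 0` and an
integer `N ≥ N₀` such that for all `n, n₁` with `n ≥ N` and `N₀ ≤ n₁ < n` one has
`C₆·n^σ·|α|ⁿ ≤ |U n − U n₁| ≤ C₅·n^σ·|α|ⁿ`. -/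
theorem difference_growth_bounds (R : LinRecSeq) (α : ℂ)
    (hdom : R.HasDomRoot α) (hα : 1 < ‖α‖)
    (N₀ : ℕ) (hmono : ∀ n : ℕ, N₀ ≤ n → 0 < |R.U n| ∧ |R.U n| < |R.U (n + 1)|) :
    ∃ C₅ C₆ : ℝ, 0 < C₆ ∧ C₆ ≤ C₅ ∧ ∃ N : ℕ, N₀ ≤ N ∧
      ∀ n n₁ : ℕ, N ≤ n → N₀ ≤ n₁ → n₁ < n →
        C₆ * (n : ℝ) ^ R.domDeg * ‖α‖ ^ n ≤ |((R.U n : ℝ) - (R.U n₁ : ℝ))| ∧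
        |((R.U n : ℝ) - (R.U n₁ : ℝ))| ≤ C₅ * (n : ℝ) ^ R.domDeg * ‖α‖ ^ n := by
  obtain ⟨hroot, hsmall⟩ := hdom
  have hA1 : (1:ℝ) < ‖α‖ := hα
  have hαne : α ≠ 0 := by
    intro h
    rw [h, norm_zero] at hA1
    linarith
  set A := ‖α‖ with hAdef
  have hApos : 0 < A := lt_trans one_pos hA1
  set σ := R.domDeg with hσdef
  set lc := R.domPoly.leadingCoeff with hlcdef
  have hane : R.domPoly ≠ 0 := R.a_ne R.i0
  have hlcne : lc ≠ 0 := Polynomial.leadingCoeff_ne_zero.mpr hane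
  set L := ‖lc‖ with hLdef
  have hLpos : 0 < L := norm_pos_iff.mpr hlcne
  -- Step 1: the complex sequence U n / (n^σ α^n) tends to lc
  have hV : Filter.Tendsto (fun n : ℕ => (R.U n : ℂ) / ((n:ℂ)^σ * α^n))
      Filter.atTop (nhds lc) := by
    have h1 : Filter.Tendsto (fun n : ℕ => R.domPoly.eval (n:ℂ) / (n:ℂ)^σ)
        Filter.atTop (nhds lc) := aux_poly_div R.domPoly
    have h2 : Filter.Tendsto (fun n : ℕ => ∑ i ∈ Finset.univ.erase R.i0,
        ((R.a i).eval (n:ℂ) * (R.root i / α)^n) / (n:ℂ)^σ) Filter.atTop (nhds 0) := by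
      have hterm : ∀ i ∈ Finset.univ.erase R.i0, Filter.Tendsto
          (fun n : ℕ => ((R.a i).eval (n:ℂ) * (R.root i / α)^n) / (n:ℂ)^σ)
          Filter.atTop (nhds 0) := by
        intro i hi
        have hine : i ≠ R.i0 := (Finset.mem_erase.mp hi).1
        have hzi : ‖R.root i / α‖ < 1 := by
          rw [norm_div, div_lt_one (by simpa [hAdef] using hApos)]
          simpa using hsmall i hine
        have hg : Filter.Tendsto (fun n : ℕ => ‖(R.a i).eval (n:ℂ) * (R.root i / α)^n‖)
            Filter.atTop (nhds 0) := by
          simpa using (aux_poly_mul_geom (R.a i) hzi).norm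
        refine squeeze_zero_norm' ?_ hg
        filter_upwards [Filter.eventually_ge_atTop 1] with n hn
        rw [norm_div]
        have h1le : (1:ℝ) ≤ ‖(n:ℂ)^σ‖ := by
          rw [norm_pow]
          apply one_le_pow₀
          simpa using (by exact_mod_cast hn : (1:ℝ) ≤ (n:ℝ))
        exact div_le_self (norm_nonneg _) h1le
      have := tendsto_finset_sum (Finset.univ.erase R.i0) hterm
      simpa using this
    have hW : Filter.Tendsto (fun n : ℕ => R.domPoly.eval (n:ℂ) / (n:ℂ)^σ +
        ∑ i ∈ Finset.univ.erase R.i0,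
          ((R.a i).eval (n:ℂ) * (R.root i / α)^n) / (n:ℂ)^σ)
        Filter.atTop (nhds lc) := by
      simpa using h1.add h2
    refine hW.congr' ?_
    filter_upwards [Filter.eventually_ge_atTop 1] with n hn
    have hne : (n:ℂ) ≠ 0 := Nat.cast_ne_zero.mpr (by omega)
    have hαpow : α ^ n ≠ 0 := pow_ne_zero _ hαne
    have hnpow : (n:ℂ) ^ σ ≠ 0 := pow_ne_zero _ hne
    rw [R.formula n, ← Finset.add_sum_erase Finset.univ _ (Finset.mem_univ R.i0),
      add_div, Finset.sum_div]
    have hd : (R.a R.i0).eval (n:ℂ) * R.root R.i0 ^ n / ((n:ℂ)^σ * α^n)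
        = R.domPoly.eval (n:ℂ) / (n:ℂ)^σ := by
      rw [hroot]
      show R.domPoly.eval (n:ℂ) * α ^ n / ((n:ℂ)^σ * α^n) = _
      field_simp
    rw [hd]
    congr 1
    refine Finset.sum_congr rfl fun i _ => ?_
    rw [div_pow, mul_div_assoc, div_div, mul_comm (α ^ n) ((n:ℂ) ^ σ)]
    exact (mul_div_assoc _ _ _).symm
  -- Step 2: transfer to real absolute values
  have hT : Filter.Tendsto (fun n : ℕ => |(R.U n : ℝ)| / ((n:ℝ)^σ * A^n))
      Filter.atTop (nhds L) := by
    have habs : Filter.Tendsto (fun n : ℕ =>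
        ‖(R.U n : ℂ) / ((n:ℂ)^σ * α^n)‖) Filter.atTop (nhds L) :=
      (continuous_norm.tendsto lc).comp hV
    refine habs.congr' ?_
    filter_upwards [Filter.eventually_ge_atTop 1] with n hn
    rw [norm_div, norm_mul, norm_pow, norm_pow, Complex.norm_natCast]
    congr 1
    have h1 : (R.U n : ℂ) = ((R.U n : ℤ) : ℂ) := by norm_cast
    rw [h1, Complex.norm_intCast]
  -- Step 3: pick ε and N₁
  set ε := L * (A - 1) / (2 * (A + 1)) with hεdef
  have hεpos : 0 < ε := div_pos (mul_pos hLpos (by linarith)) (by linarith)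
  have hkey : ε * (2 * (A + 1)) = L * (A - 1) := by
    rw [hεdef]
    field_simp
  obtain ⟨N₁, hN₁⟩ := Metric.tendsto_atTop.mp hT ε hεpos
  have hbound : ∀ m : ℕ, N₁ ≤ m → 1 ≤ m →
      (L - ε) * ((m:ℝ)^σ * A^m) ≤ |(R.U m:ℝ)| ∧
      |(R.U m:ℝ)| ≤ (L + ε) * ((m:ℝ)^σ * A^m) := by
    intro m h1 h2
    have hmpos : (0:ℝ) < (m:ℝ) := by exact_mod_cast h2
    have hTm : 0 < (m:ℝ)^σ * A^m := mul_pos (pow_pos hmpos _) (pow_pos hApos _)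
    have hd := hN₁ m h1
    rw [Real.dist_eq, abs_lt] at hd
    constructor
    · have h3 : L - ε < |(R.U m:ℝ)| / ((m:ℝ)^σ * A^m) := by linarith [hd.1]
      rw [lt_div_iff₀ hTm] at h3
      linarith
    · have h3 : |(R.U m:ℝ)| / ((m:ℝ)^σ * A^m) < L + ε := by linarith [hd.2]
      rw [div_lt_iff₀ hTm] at h3
      linarith
  -- Step 4: constants
  refine ⟨2*(L+ε), (L-ε) - (L+ε)/A, ?_, ?_, max (N₁+1) (N₀+2), ?_, ?_⟩
  · rw [sub_pos, div_lt_iff₀ hApos]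
    nlinarith [hkey, mul_pos hLpos (show (0:ℝ) < A - 1 by linarith), hεpos]
  · have h0 : 0 ≤ (L+ε)/A := by positivity
    linarith
  · omega
  · intro n n₁ hNn hn₁N₀ hlt
    have hn2 : 2 ≤ n := le_trans (le_trans (by omega) (le_max_right (N₁+1) (N₀+2))) hNn
    obtain ⟨m, rfl⟩ : ∃ m, n = m + 1 := ⟨n - 1, by omega⟩
    have hm1 : 1 ≤ m := by omega
    have hmN₁ : N₁ ≤ m := by
      have := le_trans (le_max_left (N₁+1) (N₀+2)) hNn
      omega
    have hUn := hbound (m+1) (by omega) (by omega)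
    have hUm := hbound m hmN₁ hm1
    have hr1 : |(R.U n₁:ℝ)| ≤ |(R.U m:ℝ)| := by
      rw [← Int.cast_abs, ← Int.cast_abs, Int.cast_le]
      exact abs_U_mono R N₀ hmono n₁ m hn₁N₀ (by omega)
    have hr2 : |(R.U n₁:ℝ)| ≤ |(R.U (m+1):ℝ)| := by
      rw [← Int.cast_abs, ← Int.cast_abs, Int.cast_le]
      exact abs_U_mono R N₀ hmono n₁ (m+1) hn₁N₀ (by omega)
    have hmono_pow : ((m:ℝ))^σ ≤ (((m+1:ℕ)):ℝ)^σ := by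
      apply pow_le_pow_left₀ (by positivity)
      push_cast
      linarith
    have hApowpos : (0:ℝ) < A ^ m := pow_pos hApos m
    have hnpowpos : (0:ℝ) < (((m+1:ℕ)):ℝ)^σ := by
      apply pow_pos
      push_cast
      positivity
    have e1 : ((L-ε) - (L+ε)/A) * (((m+1:ℕ)):ℝ)^σ * A^(m+1)
        = (L-ε) * ((((m+1:ℕ)):ℝ)^σ * A^(m+1)) - (L+ε) * ((((m+1:ℕ)):ℝ)^σ * A^m) := by
      rw [pow_succ]
      field_simp
    have e2 : (L+ε) * (((m:ℝ))^σ * A^m) ≤ (L+ε) * ((((m+1:ℕ)):ℝ)^σ * A^m) := by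
      have : ((m:ℝ))^σ * A^m ≤ (((m+1:ℕ)):ℝ)^σ * A^m :=
        mul_le_mul_of_nonneg_right hmono_pow hApowpos.le
      exact mul_le_mul_of_nonneg_left this (by linarith)
    have hlow : |(R.U (m+1):ℝ)| - |(R.U n₁:ℝ)| ≤ |(R.U (m+1):ℝ) - (R.U n₁:ℝ)| :=
      abs_sub_abs_le_abs_sub _ _
    have hup : |(R.U (m+1):ℝ) - (R.U n₁:ℝ)| ≤ |(R.U (m+1):ℝ)| + |(R.U n₁:ℝ)| :=
      abs_sub _ _
    constructor
    · rw [e1]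
      linarith [hUn.1, hUm.2]
    · have : 2*(L+ε) * (((m+1:ℕ)):ℝ)^σ * A^(m+1)
          = 2 * ((L+ε) * ((((m+1:ℕ)):ℝ)^σ * A^(m+1))) := by ring
      rw [this]
      linarith [hUn.2]
end

section
/- There exist constants C₁₆, C₁₇ > 0 and integers N, M such that every solution (n, m, n₁, m₁) of U_n − U_{n₁} = V_m − V_{m₁} with n > n₁ ≥ N₀, m > m₁ ≥ M₀, n ≥ N, m ≥ M satisfies b(m) ≠ 0 and | (a(n)·α^n)/(b(m)·β^m) − 1 | ≤ max{ C₁₆·(α'/|α|)^{n−n₁}, C₁₇·(β'/|β|)^{m−m₁} }. -/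
open Polynomial

section AuxLemmas
open Polynomial Filter Topology Finset

lemma aux_poly_geom (d : ℕ) {s r : ℝ} (hs : 0 ≤ s) (hsr : s < r) (hr : 1 ≤ r) :
    ∃ C : ℝ, 0 < C ∧ ∀ n : ℕ, (n + 1 : ℝ) ^ d * s ^ n ≤ C * r ^ n := by
  have hr0 : (0:ℝ) < r := lt_of_lt_of_le one_pos hr
  rcases eq_or_lt_of_le hs with h0 | hs'
  · refine ⟨1, one_pos, fun n => ?_⟩
    cases n with
    | zero => simp
    | succ k =>
        rw [← h0, zero_pow (Nat.succ_ne_zero k), mul_zero, one_mul]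
        positivity
  · set g : ℕ → ℝ := fun n => (n + 1 : ℝ) ^ d * (s / r) ^ n with hg
    have hq1 : |s / r| < 1 := by
      rw [abs_of_pos (div_pos hs' hr0)]
      exact (div_lt_one hr0).2 hsr
    have h1 : Tendsto (fun n : ℕ => ((n : ℝ)) ^ d * (s / r) ^ n) atTop (𝓝 0) :=
      tendsto_pow_const_mul_const_pow_of_abs_lt_one d hq1
    have h2 : Tendsto g atTop (𝓝 0) := by
      have h3 : Tendsto (fun n : ℕ => ((n + 1 : ℕ) : ℝ) ^ d * (s / r) ^ (n + 1)) atTop (𝓝 0) :=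
        h1.comp (tendsto_add_atTop_nat 1)
      have h4 : Tendsto (fun n : ℕ => (((n + 1 : ℕ) : ℝ) ^ d * (s / r) ^ (n + 1)) * (r / s))
          atTop (𝓝 (0 * (r / s))) := h3.mul_const _
      rw [zero_mul] at h4
      refine h4.congr fun n => ?_
      have hs0 : s ≠ 0 := ne_of_gt hs'
      have hr0' : r ≠ 0 := ne_of_gt hr0
      have key : (s / r) ^ (n + 1) * (r / s) = (s / r) ^ n := by
        rw [pow_succ, mul_assoc, div_mul_div_comm, mul_comm s r,
          div_self (by positivity), mul_one]
      rw [mul_assoc, key]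
      push_cast
      ring
    obtain ⟨C, hC⟩ := h2.bddAbove_range
    refine ⟨C + 1, ?_, fun n => ?_⟩
    · have : g 0 ≤ C := hC ⟨0, rfl⟩
      have : (1:ℝ) ≤ C := by simpa [hg] using this
      linarith
    · have h5 : g n ≤ C := hC ⟨n, rfl⟩
      have h6 : (n + 1 : ℝ) ^ d * s ^ n = g n * r ^ n := by
        rw [hg]
        simp only []
        rw [div_pow, mul_assoc, div_mul_cancel₀]
        positivity
      rw [h6]
      have : (0:ℝ) < r ^ n := by positivity
      nlinarith

lemma aux_poly_upper (P : ℂ[X]) :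
    ∃ C : ℝ, 0 < C ∧ ∀ n : ℕ, ‖P.eval (n : ℂ)‖ ≤ C * (n + 1 : ℝ) ^ P.natDegree := by
  obtain ⟨d, hd⟩ : ∃ d, P.natDegree = d := ⟨_, rfl⟩
  rw [hd]
  refine ⟨(∑ j ∈ range (d + 1), ‖P.coeff j‖) + 1, by positivity, fun n => ?_⟩
  have h1 : P.eval (n : ℂ) = ∑ j ∈ range (d + 1), P.coeff j * (n : ℂ) ^ j := by
    rw [← hd]; exact P.eval_eq_sum_range _
  rw [h1]
  calc ‖∑ j ∈ range (d + 1), P.coeff j * (n : ℂ) ^ j‖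
      ≤ ∑ j ∈ range (d + 1), ‖P.coeff j * (n : ℂ) ^ j‖ :=
        norm_sum_le _ _
    _ ≤ ∑ j ∈ range (d + 1), ‖P.coeff j‖ * (n + 1 : ℝ) ^ d := by
        refine Finset.sum_le_sum fun j hj => ?_
        rw [norm_mul, norm_pow, Complex.norm_natCast]
        refine mul_le_mul_of_nonneg_left ?_ (norm_nonneg _)
        calc (n : ℝ) ^ j ≤ (n + 1 : ℝ) ^ j := by
              exact pow_le_pow_left₀ (Nat.cast_nonneg n) (by linarith) j
          _ ≤ (n + 1 : ℝ) ^ d := by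
              refine pow_le_pow_right₀ (by linarith [Nat.cast_nonneg (α := ℝ) n]) ?_
              exact Nat.lt_succ_iff.mp (Finset.mem_range.mp hj)
    _ = (∑ j ∈ range (d + 1), ‖P.coeff j‖) * (n + 1 : ℝ) ^ d := by
        rw [← Finset.sum_mul]
    _ ≤ ((∑ j ∈ range (d + 1), ‖P.coeff j‖) + 1) * (n + 1 : ℝ) ^ d := by
        have : (0:ℝ) < (n + 1 : ℝ) ^ d := by positivity
        nlinarith


lemma aux_ratio_tendsto (j d : ℕ) (hj : j ≤ d) :
    Tendsto (fun n : ℕ => (n : ℝ) ^ j / (n + 1 : ℝ) ^ d)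
      atTop (𝓝 (if j = d then 1 else 0)) := by
  rcases eq_or_lt_of_le hj with rfl | hjd
  · simp only [if_pos rfl]
    have h1 : Tendsto (fun n : ℕ => (n : ℝ) / (n + 1 : ℝ)) atTop (𝓝 1) :=
      tendsto_natCast_div_add_atTop 1
    have := h1.pow j
    rw [one_pow] at this
    refine this.congr fun n => ?_
    rw [div_pow]
  · rw [if_neg (by omega)]
    have hb : ∀ n : ℕ, (n : ℝ) ^ j / (n + 1 : ℝ) ^ d ≤ 1 / (n + 1 : ℝ) := by
      intro n
      rw [div_le_div_iff₀ (by positivity) (by positivity)]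
      have h2 : (n + 1 : ℝ) ^ d = (n + 1 : ℝ) ^ j * (n + 1 : ℝ) ^ (d - j) := by
        rw [← pow_add]; congr 1; omega
      rw [one_mul, h2]
      have h3 : (n : ℝ) ^ j ≤ (n + 1 : ℝ) ^ j :=
        pow_le_pow_left₀ (Nat.cast_nonneg n) (by linarith) j
      have h4 : (n + 1 : ℝ) ≤ (n + 1 : ℝ) ^ (d - j) := by
        have h4' : (n + 1 : ℝ) ^ 1 ≤ (n + 1 : ℝ) ^ (d - j) :=
          pow_le_pow_right₀ (by linarith [Nat.cast_nonneg (α := ℝ) n]) (by omega)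
        simpa using h4'
      have h5 : (0:ℝ) ≤ (n:ℝ) ^ j := by positivity
      have h6 : (0:ℝ) < (n + 1 : ℝ) := by positivity
      nlinarith
    refine squeeze_zero (fun n => by positivity) hb ?_
    exact tendsto_one_div_add_atTop_nhds_zero_nat

lemma aux_poly_tendsto (P : ℂ[X]) :
    Tendsto (fun n : ℕ => ‖P.eval (n : ℂ)‖ / (n + 1 : ℝ) ^ P.natDegree)
      atTop (𝓝 (‖P.leadingCoeff‖)) := by
  obtain ⟨d, hd⟩ : ∃ d, P.natDegree = d := ⟨_, rfl⟩
  rw [hd]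
  have main : Tendsto (fun n : ℕ => P.eval (n : ℂ) / ((n : ℂ) + 1) ^ d)
      atTop (𝓝 (P.coeff d)) := by
    have h1 : ∀ n : ℕ, P.eval (n : ℂ) / ((n : ℂ) + 1) ^ d
        = ∑ j ∈ range (d + 1), P.coeff j * (((n : ℝ) ^ j / (n + 1 : ℝ) ^ d : ℝ) : ℂ) := by
      intro n
      have h2 : P.eval (n : ℂ) = ∑ j ∈ range (d + 1), P.coeff j * (n : ℂ) ^ j := by
        rw [← hd]; exact P.eval_eq_sum_range _
      rw [h2, Finset.sum_div]
      refine Finset.sum_congr rfl fun j _ => ?_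
      rw [mul_div_assoc]
      congr 1
      push_cast
      ring
    have h3 : Tendsto (fun n : ℕ => ∑ j ∈ range (d + 1),
        P.coeff j * (((n : ℝ) ^ j / (n + 1 : ℝ) ^ d : ℝ) : ℂ)) atTop
        (𝓝 (∑ j ∈ range (d + 1), P.coeff j * (if j = d then (1:ℂ) else 0))) := by
      refine tendsto_finset_sum _ fun j hj => ?_
      have h4 := aux_ratio_tendsto j d (Nat.lt_succ_iff.mp (Finset.mem_range.mp hj))
      have h5 : Tendsto (fun n : ℕ => (((n : ℝ) ^ j / (n + 1 : ℝ) ^ d : ℝ) : ℂ)) atTop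
          (𝓝 (((if j = d then (1:ℝ) else 0) : ℝ) : ℂ)) :=
        (Complex.continuous_ofReal.tendsto _).comp h4
      have h6 : (((if j = d then (1:ℝ) else 0) : ℝ) : ℂ) = (if j = d then (1:ℂ) else 0) := by
        split <;> simp
      rw [h6] at h5
      exact h5.const_mul _
    have h7 : ∑ j ∈ range (d + 1), P.coeff j * (if j = d then (1:ℂ) else 0) = P.coeff d := by
      rw [Finset.sum_eq_single d]
      · simp
      · intro j _ hjd; simp [hjd]
      · intro h; exact absurd (Finset.self_mem_range_succ d) h
    rw [← h7]
    exact (tendsto_congr h1).mpr h3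
  have habs : Tendsto (fun n : ℕ => ‖P.eval (n : ℂ) / ((n : ℂ) + 1) ^ d‖)
      atTop (𝓝 (‖P.coeff d‖)) :=
    (continuous_norm.tendsto _).comp main
  have hlc : P.leadingCoeff = P.coeff d := by rw [Polynomial.leadingCoeff, hd]
  rw [hlc]
  refine habs.congr fun n => ?_
  rw [norm_div, norm_pow]
  congr 2
  have : ((n : ℂ) + 1) = (((n : ℝ) + 1 : ℝ) : ℂ) := by push_cast; ring
  rw [this, Complex.norm_real, Real.norm_eq_abs, abs_of_nonneg (by positivity)]

end AuxLemmas

open Filter Topology Finset in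
private lemma aux_mono_chain (R : LinRecSeq) (N₀ : ℕ)
    (hmono : ∀ n : ℕ, N₀ ≤ n → 0 < |R.U n| ∧ |R.U n| < |R.U (n + 1)|) :
    ∀ n₁ n : ℕ, N₀ ≤ n₁ → n₁ ≤ n → |R.U n₁| ≤ |R.U n| := by
  intro n₁ n h1 h2
  induction n, h2 using Nat.le_induction with
  | base => exact le_refl _
  | succ n hn ih => exact le_trans ih (hmono n (h1.trans hn)).2.le

open Filter Topology Finset in
private lemma aux_tail_bound (R : LinRecSeq) (z : ℂ) (hdom : R.HasDomRoot z)
    (r : ℝ) (hr1 : 1 < r) (hr3 : ∀ i, i ≠ R.i0 → ‖R.root i‖ < r) :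
    ∃ CE : ℝ, 0 < CE ∧ ∀ n : ℕ,
      ‖(R.U n : ℂ) - R.domPoly.eval (n : ℂ) * z ^ n‖ ≤ CE * r ^ n := by
  have hr0 : (0:ℝ) < r := lt_trans one_pos hr1
  have hterm : ∀ i : Fin R.t, ∃ C : ℝ, 0 < C ∧ (i ≠ R.i0 → ∀ n : ℕ,
      ‖(R.a i).eval (n : ℂ) * R.root i ^ n‖ ≤ C * r ^ n) := by
    intro i
    by_cases hi : i = R.i0
    · exact ⟨1, one_pos, fun h => absurd hi h⟩
    · obtain ⟨C1, hC1, hP⟩ := aux_poly_upper (R.a i)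
      obtain ⟨C2, hC2, hG⟩ := aux_poly_geom ((R.a i).natDegree)
        (norm_nonneg _) (hr3 i hi) hr1.le
      refine ⟨C1 * C2, by positivity, fun _ n => ?_⟩
      rw [norm_mul, norm_pow]
      calc ‖(R.a i).eval (n : ℂ)‖ * ‖R.root i‖ ^ n
          ≤ (C1 * (n + 1 : ℝ) ^ (R.a i).natDegree) * ‖R.root i‖ ^ n := by
            refine mul_le_mul_of_nonneg_right (hP n) (by positivity)
        _ = C1 * ((n + 1 : ℝ) ^ (R.a i).natDegree * ‖R.root i‖ ^ n) := by ring
        _ ≤ C1 * (C2 * r ^ n) := mul_le_mul_of_nonneg_left (hG n) hC1.le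
        _ = C1 * C2 * r ^ n := by ring
  choose C hCpos hC using hterm
  have : Nonempty (Fin R.t) := ⟨R.i0⟩
  refine ⟨∑ i, C i, Finset.sum_pos (fun i _ => hCpos i) Finset.univ_nonempty, fun n => ?_⟩
  have hsum : (R.U n : ℂ) - R.domPoly.eval (n : ℂ) * z ^ n
      = ∑ i ∈ Finset.univ.erase R.i0, (R.a i).eval (n : ℂ) * R.root i ^ n := by
    rw [R.formula n, LinRecSeq.domPoly, ← hdom.1,
      ← Finset.add_sum_erase _ _ (Finset.mem_univ R.i0)]
    ring
  rw [hsum]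
  calc ‖∑ i ∈ Finset.univ.erase R.i0, (R.a i).eval (n : ℂ) * R.root i ^ n‖
      ≤ ∑ i ∈ Finset.univ.erase R.i0,
          ‖(R.a i).eval (n : ℂ) * R.root i ^ n‖ := norm_sum_le _ _
    _ ≤ ∑ i ∈ Finset.univ.erase R.i0, C i * r ^ n :=
        Finset.sum_le_sum fun i hi => hC i (Finset.ne_of_mem_erase hi) n
    _ ≤ ∑ i ∈ Finset.univ, C i * r ^ n :=
        Finset.sum_le_sum_of_subset_of_nonneg (Finset.erase_subset _ _)
          (fun i _ _ => le_of_lt (mul_pos (hCpos i) (pow_pos hr0 n)))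
    _ = (∑ i, C i) * r ^ n := by rw [Finset.sum_mul]

open Filter Topology Finset in
private lemma aux_seq_estimates (R : LinRecSeq) (z : ℂ) (hdom : R.HasDomRoot z)
    (hz1 : 1 < ‖z‖)
    (r : ℝ) (hr1 : 1 < r) (hr2 : r < ‖z‖)
    (hr3 : ∀ i, i ≠ R.i0 → ‖R.root i‖ < r)
    (N₀ : ℕ) (hmono : ∀ n : ℕ, N₀ ≤ n → 0 < |R.U n| ∧ |R.U n| < |R.U (n + 1)|) :
    ∃ CU CE c δ : ℝ, 0 < CU ∧ 0 < CE ∧ 0 < c ∧ 0 < δ ∧ ∃ N : ℕ, N₀ < N ∧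
      (∀ n : ℕ, ‖(R.U n : ℂ) - R.domPoly.eval (n : ℂ) * z ^ n‖ ≤ CE * r ^ n) ∧
      (∀ n : ℕ, |(R.U n : ℝ)| ≤ CU * (((n : ℝ) + 1) ^ R.domDeg * ‖z‖ ^ n)) ∧
      (∀ n : ℕ, N ≤ n → c * (((n : ℝ) + 1) ^ R.domDeg * ‖z‖ ^ n) ≤ |(R.U n : ℝ)|) ∧
      (∀ n n₁ : ℕ, N ≤ n → N₀ ≤ n₁ → n₁ < n →
        δ * |(R.U n : ℝ)| ≤ |(R.U n : ℝ) - (R.U n₁ : ℝ)|) ∧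
      (∀ n : ℕ, N ≤ n →
        ‖(R.U n : ℂ) - R.domPoly.eval (n : ℂ) * z ^ n‖ ≤ |(R.U n : ℝ)| / 2) := by
  obtain ⟨CE, hCE, htail⟩ := aux_tail_bound R z hdom r hr1 hr3
  obtain ⟨CA, hCA, hup⟩ := aux_poly_upper R.domPoly
  have ha1 : 1 < ‖z‖ := hz1
  set a := ‖z‖ with ha
  set d := R.domDeg with hdd
  have ha0 : (0:ℝ) < a := lt_trans one_pos ha1
  have hr0 : (0:ℝ) < r := lt_trans one_pos hr1
  set L := ‖R.domPoly.leadingCoeff‖ with hL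
  have hL0 : 0 < L := by
    rw [hL]
    exact norm_pos_iff.mpr (Polynomial.leadingCoeff_ne_zero.mpr (R.a_ne R.i0))
  have hUabs : ∀ n : ℕ, |(R.U n : ℝ)| = ‖(R.U n : ℂ)‖ :=
    fun n => (Complex.norm_intCast _).symm
  -- global upper bound
  have hCU : ∀ n : ℕ, |(R.U n : ℝ)| ≤ (CA + CE) * (((n : ℝ) + 1) ^ d * a ^ n) := by
    intro n
    have h0 : ‖(R.U n : ℂ)‖
        = ‖R.domPoly.eval (n:ℂ) * z ^ n
            + ((R.U n : ℂ) - R.domPoly.eval (n:ℂ) * z ^ n)‖ := by congr 1; ring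
    have h1 : ‖(R.U n : ℂ)‖
        ≤ ‖R.domPoly.eval (n:ℂ) * z ^ n‖ + CE * r ^ n := by
      rw [h0]
      exact le_trans (norm_add_le _ _) (by gcongr; exact htail n)
    have h2 : ‖R.domPoly.eval (n:ℂ) * z ^ n‖ ≤ CA * ((n:ℝ) + 1) ^ d * a ^ n := by
      rw [norm_mul, norm_pow]
      exact mul_le_mul_of_nonneg_right (hup n) (by positivity)
    have h3 : r ^ n ≤ a ^ n := pow_le_pow_left₀ hr0.le hr2.le n
    have h4 : (1:ℝ) ≤ ((n:ℝ) + 1) ^ d := one_le_pow₀ (by linarith [Nat.cast_nonneg (α := ℝ) n])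
    have h5 : (0:ℝ) < a ^ n := by positivity
    rw [hUabs n]
    have h6 : (1:ℝ) * a ^ n ≤ ((n:ℝ) + 1) ^ d * a ^ n := mul_le_mul_of_nonneg_right h4 h5.le
    rw [one_mul] at h6
    have h7 : CE * r ^ n ≤ CE * (((n:ℝ) + 1) ^ d * a ^ n) :=
      mul_le_mul_of_nonneg_left (le_trans h3 h6) hCE.le
    have h8 : (CA + CE) * (((n:ℝ) + 1) ^ d * a ^ n)
        = CA * ((n:ℝ) + 1) ^ d * a ^ n + CE * (((n:ℝ) + 1) ^ d * a ^ n) := by ring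
    linarith
  -- the limit of |U n| / ((n+1)^d a^n)
  have hW : Tendsto (fun n : ℕ => |(R.U n : ℝ)| / (((n : ℝ) + 1) ^ d * a ^ n)) atTop (𝓝 L) := by
    have hg := aux_poly_tendsto R.domPoly
    rw [show R.domPoly.natDegree = d from rfl, ← hL] at hg
    refine hg.congr_dist (squeeze_zero (fun n => dist_nonneg)
      (g := fun n => CE * (r / a) ^ n) (fun n => ?_) ?_)
    · have hD : (0:ℝ) < ((n : ℝ) + 1) ^ d * a ^ n := by positivity
      rw [Real.dist_eq]
      have h2 : ‖R.domPoly.eval (n:ℂ)‖ / ((n : ℝ) + 1) ^ d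
          - |(R.U n : ℝ)| / (((n : ℝ) + 1) ^ d * a ^ n)
          = (‖R.domPoly.eval (n:ℂ) * z ^ n‖ - ‖(R.U n : ℂ)‖)
            / (((n : ℝ) + 1) ^ d * a ^ n) := by
        rw [norm_mul, norm_pow, hUabs n, ← ha]
        field_simp
      rw [h2, abs_div, abs_of_pos hD, div_le_iff₀ hD]
      have h3 : |‖R.domPoly.eval (n:ℂ) * z ^ n‖ - ‖(R.U n : ℂ)‖|
          ≤ ‖(R.U n : ℂ) - R.domPoly.eval (n:ℂ) * z ^ n‖ := by
        rw [abs_sub_comm]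
        exact abs_norm_sub_norm_le _ _
      have h4 : CE * (r / a) ^ n * (((n : ℝ) + 1) ^ d * a ^ n)
          = (CE * r ^ n) * ((n : ℝ) + 1) ^ d := by
        rw [div_pow]
        field_simp
      have h5 : (1:ℝ) ≤ ((n:ℝ) + 1) ^ d := one_le_pow₀ (by linarith [Nat.cast_nonneg (α := ℝ) n])
      have h6 : (0:ℝ) ≤ CE * r ^ n := by positivity
      rw [h4]
      nlinarith [h3, htail n]
    · have := (tendsto_pow_atTop_nhds_zero_of_lt_one (by positivity)
        ((div_lt_one ha0).2 hr2)).const_mul CE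
      simpa using this
  -- the quantitative constants
  set ε := L * (a - 1) / (a + 3) with hε
  have hε0 : 0 < ε := by
    rw [hε]
    have h' : 0 < a - 1 := by linarith
    exact div_pos (mul_pos hL0 h') (by linarith)
  set c := 4 * L / (a + 3) with hc
  have hc0 : 0 < c := by rw [hc]; positivity
  have hcε : L - ε = c := by rw [hε, hc]; field_simp; ring
  set q := (a + 1) / (2 * a) with hq
  have hq0 : 0 < q := by rw [hq]; positivity
  have hq1 : q < 1 := by rw [hq, div_lt_one (by linarith)]; linarith
  have hkey : L + ε = q * c * a := by rw [hε, hc, hq]; field_simp; ring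
  obtain ⟨N₁, hN₁⟩ := (Metric.tendsto_atTop.mp hW) ε hε0
  have hWlow : ∀ n, N₁ ≤ n → c * (((n : ℝ) + 1) ^ d * a ^ n) ≤ |(R.U n : ℝ)| := by
    intro n hn
    have h1 := hN₁ n hn
    rw [Real.dist_eq, abs_lt] at h1
    have hD : (0:ℝ) < ((n : ℝ) + 1) ^ d * a ^ n := by positivity
    rw [← hcε]
    have h2 : L - ε ≤ |(R.U n : ℝ)| / (((n : ℝ) + 1) ^ d * a ^ n) := by linarith [h1.1]
    calc (L - ε) * (((n : ℝ) + 1) ^ d * a ^ n)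
        ≤ (|(R.U n : ℝ)| / (((n : ℝ) + 1) ^ d * a ^ n)) * (((n : ℝ) + 1) ^ d * a ^ n) :=
          mul_le_mul_of_nonneg_right h2 hD.le
      _ = |(R.U n : ℝ)| := div_mul_cancel₀ _ hD.ne'
  have hWup : ∀ n, N₁ ≤ n → |(R.U n : ℝ)| ≤ (L + ε) * (((n : ℝ) + 1) ^ d * a ^ n) := by
    intro n hn
    have h1 := hN₁ n hn
    rw [Real.dist_eq, abs_lt] at h1
    have hD : (0:ℝ) < ((n : ℝ) + 1) ^ d * a ^ n := by positivity
    have h2 : |(R.U n : ℝ)| / (((n : ℝ) + 1) ^ d * a ^ n) ≤ L + ε := by linarith [h1.2]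
    calc |(R.U n : ℝ)|
        = (|(R.U n : ℝ)| / (((n : ℝ) + 1) ^ d * a ^ n)) * (((n : ℝ) + 1) ^ d * a ^ n) :=
          (div_mul_cancel₀ _ hD.ne').symm
      _ ≤ (L + ε) * (((n : ℝ) + 1) ^ d * a ^ n) := mul_le_mul_of_nonneg_right h2 hD.le
  have hra : Tendsto (fun n : ℕ => (r / a) ^ n) atTop (𝓝 0) :=
    tendsto_pow_atTop_nhds_zero_of_lt_one (by positivity) ((div_lt_one ha0).2 hr2)
  obtain ⟨N₂, hN₂⟩ := (Metric.tendsto_atTop.mp hra) (c / (2 * CE)) (by positivity)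
  have hN₂' : ∀ n, N₂ ≤ n → (r / a) ^ n ≤ c / (2 * CE) := by
    intro n hn
    have h1 := hN₂ n hn
    rw [Real.dist_eq, sub_zero, abs_of_nonneg (by positivity)] at h1
    exact h1.le
  refine ⟨CA + CE, CE, c, 1 - q, by positivity, hCE, hc0, by linarith,
    max (max N₁ N₂) N₀ + 2, by omega, htail, hCU, ?_, ?_, ?_⟩
  · intro n hn
    exact hWlow n (by omega)
  · -- the gap estimate
    intro n n₁ hn hn₁ hn₁n
    obtain ⟨p, rfl⟩ : ∃ p, n = p + 1 := ⟨n - 1, by omega⟩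
    have hchain : |(R.U n₁ : ℝ)| ≤ |(R.U p : ℝ)| := by
      have := aux_mono_chain R N₀ hmono n₁ p hn₁ (by omega)
      exact_mod_cast this
    have h1 : |(R.U p : ℝ)| ≤ (L + ε) * (((p : ℝ) + 1) ^ d * a ^ p) := hWup p (by omega)
    have h2 : c * (((p : ℝ) + 1 + 1) ^ d * a ^ (p + 1)) ≤ |(R.U (p + 1) : ℝ)| := by
      have := hWlow (p + 1) (by omega)
      push_cast at this ⊢
      exact this
    have h3 : (L + ε) * (((p : ℝ) + 1) ^ d * a ^ p) ≤ q * |(R.U (p + 1) : ℝ)| := by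
      have e1 : (((p : ℝ) + 1) ^ d) ≤ (((p : ℝ) + 1 + 1) ^ d) :=
        pow_le_pow_left₀ (by positivity) (by linarith) d
      have e2 : q * (c * (((p : ℝ) + 1 + 1) ^ d * a ^ (p + 1)))
          = (L + ε) * (((p : ℝ) + 1 + 1) ^ d * a ^ p) := by
        rw [hkey, pow_succ]
        ring
      have e3 : (L + ε) * (((p : ℝ) + 1) ^ d * a ^ p)
          ≤ (L + ε) * (((p : ℝ) + 1 + 1) ^ d * a ^ p) := by
        have hLε : 0 < L + ε := by linarith
        have hap : (0:ℝ) < a ^ p := by positivity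
        exact mul_le_mul_of_nonneg_left (mul_le_mul_of_nonneg_right e1 hap.le) hLε.le
      have e4 : q * (c * (((p : ℝ) + 1 + 1) ^ d * a ^ (p + 1))) ≤ q * |(R.U (p + 1) : ℝ)| :=
        mul_le_mul_of_nonneg_left h2 hq0.le
      linarith
    have h4 : |(R.U n₁ : ℝ)| ≤ q * |(R.U (p + 1) : ℝ)| := by linarith
    have h5 : |(R.U (p + 1) : ℝ)| - |(R.U n₁ : ℝ)| ≤ |(R.U (p + 1) : ℝ) - (R.U n₁ : ℝ)| :=
      abs_sub_abs_le_abs_sub _ _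
    have hpush : ((p + 1 : ℕ) : ℝ) = (p : ℝ) + 1 := by push_cast; ring
    linarith
  · -- tail is at most half
    intro n hn
    have h1 : CE * r ^ n ≤ (c / 2) * a ^ n := by
      have h2 : (r / a) ^ n ≤ c / (2 * CE) := hN₂' n (by omega)
      have h3 : CE * ((r / a) ^ n * a ^ n) ≤ CE * ((c / (2 * CE)) * a ^ n) := by
        have hh : (0:ℝ) < a ^ n := by positivity
        exact mul_le_mul_of_nonneg_left (mul_le_mul_of_nonneg_right h2 hh.le) hCE.le
      have h4 : (r / a) ^ n * a ^ n = r ^ n := by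
        rw [div_pow]
        field_simp
      have h5 : CE * ((c / (2 * CE)) * a ^ n) = (c / 2) * a ^ n := by
        field_simp
      rw [h4] at h3
      rw [← h5]
      linarith
    have h6 : c * (((n : ℝ) + 1) ^ d * a ^ n) ≤ |(R.U n : ℝ)| := hWlow n (by omega)
    have h7 : (1:ℝ) ≤ ((n:ℝ) + 1) ^ d := one_le_pow₀ (by linarith [Nat.cast_nonneg (α := ℝ) n])
    have h8 : (0:ℝ) < a ^ n := by positivity
    calc ‖(R.U n : ℂ) - R.domPoly.eval (n : ℂ) * z ^ n‖
        ≤ CE * r ^ n := htail n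
      _ ≤ (c / 2) * a ^ n := h1
      _ ≤ |(R.U n : ℝ)| / 2 := by
          have h9 : (1:ℝ) * a ^ n ≤ ((n:ℝ) + 1) ^ d * a ^ n := mul_le_mul_of_nonneg_right h7 h8.le
          rw [one_mul] at h9
          have h10 : c * a ^ n ≤ c * (((n:ℝ) + 1) ^ d * a ^ n) :=
            mul_le_mul_of_nonneg_left h9 hc0.le
          linarith

/-- **Approximation of the main terms.** There are constants `C₁₆, C₁₇ > 0` and integers
`N, M` such that every solution `(n, m, n₁, m₁)` of `U n − U n₁ = V m − V m₁` with
`n > n₁ ≥ N₀`, `m > m₁ ≥ M₀`, `n ≥ N`, `m ≥ M` satisfies `b(m) ≠ 0` and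
`|a(n)αⁿ/(b(m)βᵐ) − 1| ≤ max{C₁₆·(α'/|α|)^(n−n₁), C₁₇·(β'/|β|)^(m−m₁)}`. -/
theorem main_term_approximation (Ru Rv : LinRecSeq) (α β : ℂ)
    (hU : Ru.HasDomRoot α) (hV : Rv.HasDomRoot β)
    (hindep : MultIndep α β)
    (hβ1 : 1 < ‖β‖) (hβα : ‖β‖ < ‖α‖)
    (N₀ M₀ : ℕ)
    (hUmono : ∀ n : ℕ, N₀ ≤ n → 0 < |Ru.U n| ∧ |Ru.U n| < |Ru.U (n + 1)|)
    (hVmono : ∀ m : ℕ, M₀ ≤ m → 0 < |Rv.U m| ∧ |Rv.U m| < |Rv.U (m + 1)|)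
    (α' β' : ℝ)
    (hα'1 : 1 < α') (hα'2 : α' < ‖α‖)
    (hα'3 : ∀ i, i ≠ Ru.i0 → ‖Ru.root i‖ < α')
    (hβ'1 : 1 < β') (hβ'2 : β' < ‖β‖)
    (hβ'3 : ∀ i, i ≠ Rv.i0 → ‖Rv.root i‖ < β') :
    ∃ C₁₆ C₁₇ : ℝ, 0 < C₁₆ ∧ 0 < C₁₇ ∧ ∃ N M : ℕ,
      ∀ n m n₁ m₁ : ℕ, N₀ ≤ n₁ → n₁ < n → M₀ ≤ m₁ → m₁ < m → N ≤ n → M ≤ m →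
        Ru.U n - Ru.U n₁ = Rv.U m - Rv.U m₁ →
        Rv.domPoly.eval (m : ℂ) ≠ 0 ∧
        ‖(Ru.domPoly.eval (n : ℂ) * α ^ n) /
            (Rv.domPoly.eval (m : ℂ) * β ^ m) - 1‖
          ≤ max (C₁₆ * (α' / ‖α‖) ^ (n - n₁))
              (C₁₇ * (β' / ‖β‖) ^ (m - m₁)) := by
  have hα1 : 1 < ‖α‖ := lt_trans hβ1 hβα
  obtain ⟨CUu, CEu, cu, δu, hCUu, hCEu, hcu, hδu, Nu, hNu0, hP1u, hP2u, hP3u, hP4u, _⟩ :=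
    aux_seq_estimates Ru α hU hα1 α' hα'1 hα'2 hα'3 N₀ hUmono
  obtain ⟨CUv, CEv, cv, δv, hCUv, hCEv, hcv, hδv, Mv, hMv0, hP1v, hP2v, hP3v, hP4v, hP6v⟩ :=
    aux_seq_estimates Rv β hV hβ1 β' hβ'1 hβ'2 hβ'3 M₀ hVmono
  have ha0 : (0:ℝ) < ‖α‖ := lt_trans one_pos hα1
  have hb0 : (0:ℝ) < ‖β‖ := lt_trans one_pos hβ1
  have hα'0 : (0:ℝ) < α' := lt_trans one_pos hα'1
  have hβ'0 : (0:ℝ) < β' := lt_trans one_pos hβ'1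
  have hK1 : (0:ℝ) < 4 * CUu / (δu * cu) := div_pos (by linarith) (mul_pos hδu hcu)
  have hK3 : (0:ℝ) < 4 * CEu / (δu * cu) := div_pos (by linarith) (mul_pos hδu hcu)
  have hK2 : (0:ℝ) < 2 * CUv / cv := div_pos (by linarith) hcv
  have hK4 : (0:ℝ) < 2 * CEv / cv := div_pos (by linarith) hcv
  refine ⟨2 * (4 * CUu / (δu * cu) + 4 * CEu / (δu * cu)),
          2 * (2 * CUv / cv + 2 * CEv / cv),
          by linarith, by linarith, Nu, Mv, ?_⟩
  intro n m n₁ m₁ hn₁0 hn₁n hm₁0 hm₁m hnN hmM heq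
  obtain ⟨k, rfl⟩ : ∃ k, n = n₁ + k := ⟨n - n₁, by omega⟩
  obtain ⟨l, rfl⟩ : ∃ l, m = m₁ + l := ⟨m - m₁, by omega⟩
  have hkpos : 0 < k := by omega
  have hlpos : 0 < l := by omega
  have hnN₀ : N₀ ≤ n₁ + k := le_trans hn₁0 (Nat.le_add_right _ _)
  have hmM₀ : M₀ ≤ m₁ + l := le_trans hm₁0 (Nat.le_add_right _ _)
  simp only [Nat.add_sub_cancel_left]
  have ht2 := hP1u (n₁ + k)
  have ht3 := hP1v (m₁ + l)
  have hP6v' := hP6v (m₁ + l) hmM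
  set X := Ru.domPoly.eval ((n₁ + k : ℕ) : ℂ) * α ^ (n₁ + k) with hXd
  set Y := Rv.domPoly.eval ((m₁ + l : ℕ) : ℂ) * β ^ (m₁ + l) with hYd
  have hUpos : (0:ℝ) < |(Ru.U (n₁ + k) : ℝ)| := by
    have h := (hUmono _ hnN₀).1
    exact_mod_cast h
  have hVpos : (0:ℝ) < |(Rv.U (m₁ + l) : ℝ)| := by
    have h := (hVmono _ hmM₀).1
    exact_mod_cast h
  have hδU : δu * |(Ru.U (n₁ + k) : ℝ)| ≤ |(Ru.U (n₁ + k) : ℝ) - (Ru.U n₁ : ℝ)| :=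
    hP4u _ n₁ hnN hn₁0 (by omega)
  have heqR : (Ru.U (n₁ + k) : ℝ) - (Ru.U n₁ : ℝ) = (Rv.U (m₁ + l) : ℝ) - (Rv.U m₁ : ℝ) := by
    exact_mod_cast heq
  have hVchain : |(Rv.U m₁ : ℝ)| ≤ |(Rv.U (m₁ + l) : ℝ)| := by
    have h := aux_mono_chain Rv M₀ hVmono m₁ (m₁ + l) hm₁0 (Nat.le_add_right _ _)
    exact_mod_cast h
  have hUVm : δu * |(Ru.U (n₁ + k) : ℝ)| ≤ 2 * |(Rv.U (m₁ + l) : ℝ)| := by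
    have h1 : |(Rv.U (m₁ + l) : ℝ) - (Rv.U m₁ : ℝ)|
        ≤ |(Rv.U (m₁ + l) : ℝ)| + |(Rv.U m₁ : ℝ)| := by
      rw [sub_eq_add_neg]
      exact le_trans (abs_add_le _ _) (by rw [abs_neg])
    rw [heqR] at hδU
    linarith
  have hVabs : |(Rv.U (m₁ + l) : ℝ)| = ‖(Rv.U (m₁ + l) : ℂ)‖ :=
    (Complex.norm_intCast _).symm
  have hYlb : |(Rv.U (m₁ + l) : ℝ)| / 2 ≤ ‖Y‖ := by
    have h2 : ‖(Rv.U (m₁ + l) : ℂ)‖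
        ≤ ‖Y‖ + ‖(Rv.U (m₁ + l) : ℂ) - Y‖ := by
      have h3 : (Rv.U (m₁ + l) : ℂ) = Y + ((Rv.U (m₁ + l) : ℂ) - Y) := by ring
      calc ‖(Rv.U (m₁ + l) : ℂ)‖
          = ‖Y + ((Rv.U (m₁ + l) : ℂ) - Y)‖ := by rw [← h3]
        _ ≤ _ := norm_add_le _ _
    linarith [hP6v', h2, hVabs]
  have hY0 : (0:ℝ) < ‖Y‖ := lt_of_lt_of_le (by linarith) hYlb
  have hYne : Y ≠ 0 := by
    intro h
    rw [h] at hY0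
    simp at hY0
  refine ⟨left_ne_zero_of_mul hYne, ?_⟩
  -- lower bounds for |Y|
  have hYa : δu * cu / 4 * ((((n₁ + k : ℕ) : ℝ) + 1) ^ Ru.domDeg * ‖α‖ ^ (n₁ + k))
      ≤ ‖Y‖ := by
    have h1 := hP3u (n₁ + k) hnN
    have h2 := mul_le_mul_of_nonneg_left h1 (le_of_lt (div_pos hδu (by norm_num : (0:ℝ) < 4)))
    linarith [h2, hUVm, hYlb]
  have hYb : cv / 2 * ((((m₁ + l : ℕ) : ℝ) + 1) ^ Rv.domDeg * ‖β‖ ^ (m₁ + l))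
      ≤ ‖Y‖ := by
    have h1 := hP3v (m₁ + l) hmM
    linarith [hYlb]
  have hαk : (0:ℝ) ≤ (α' / ‖α‖) ^ k := by positivity
  have hβl : (0:ℝ) ≤ (β' / ‖β‖) ^ l := by positivity
  -- term 1
  have hT1 : |(Ru.U n₁ : ℝ)|
      ≤ 4 * CUu / (δu * cu) * ((α' / ‖α‖) ^ k * ‖Y‖) := by
    have f1 : ((n₁:ℝ) + 1) ^ Ru.domDeg ≤ (((n₁ + k : ℕ) : ℝ) + 1) ^ Ru.domDeg :=
      pow_le_pow_left₀ (by positivity) (by push_cast; linarith [Nat.cast_nonneg (α := ℝ) k]) _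
    have f2 : (1:ℝ) ≤ α' ^ k := one_le_pow₀ hα'1.le
    have e1 : |(Ru.U n₁ : ℝ)| ≤ CUu
        * (α' ^ k * ((((n₁ + k : ℕ) : ℝ) + 1) ^ Ru.domDeg * ‖α‖ ^ n₁)) := by
      have g1 : ((n₁:ℝ) + 1) ^ Ru.domDeg * ‖α‖ ^ n₁
          ≤ α' ^ k * ((((n₁ + k : ℕ) : ℝ) + 1) ^ Ru.domDeg * ‖α‖ ^ n₁) := by
        have g2 : ((n₁:ℝ) + 1) ^ Ru.domDeg * ‖α‖ ^ n₁
            ≤ (((n₁ + k : ℕ) : ℝ) + 1) ^ Ru.domDeg * ‖α‖ ^ n₁ :=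
          mul_le_mul_of_nonneg_right f1 (pow_nonneg ha0.le _)
        have g3 := mul_le_mul f2 g2 (by positivity) (by positivity)
        rw [one_mul] at g3
        exact g3
      exact le_trans (hP2u n₁) (mul_le_mul_of_nonneg_left g1 hCUu.le)
    have e2 : 4 * CUu / (δu * cu) * ((α' / ‖α‖) ^ k
          * (δu * cu / 4 * ((((n₁ + k : ℕ) : ℝ) + 1) ^ Ru.domDeg
            * ‖α‖ ^ (n₁ + k))))
        = CUu * (α' ^ k * ((((n₁ + k : ℕ) : ℝ) + 1) ^ Ru.domDeg * ‖α‖ ^ n₁)) := by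
      rw [div_pow, pow_add]
      field_simp
    calc |(Ru.U n₁ : ℝ)| ≤ _ := e1
      _ = _ := e2.symm
      _ ≤ 4 * CUu / (δu * cu) * ((α' / ‖α‖) ^ k * ‖Y‖) := by
          refine mul_le_mul_of_nonneg_left ?_ hK1.le
          exact mul_le_mul_of_nonneg_left hYa hαk
  -- term 3
  have hT3 : CEu * α' ^ (n₁ + k)
      ≤ 4 * CEu / (δu * cu) * ((α' / ‖α‖) ^ k * ‖Y‖) := by
    have f3 : α' ^ n₁ ≤ ‖α‖ ^ n₁ := pow_le_pow_left₀ hα'0.le hα'2.le n₁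
    have f4 : (1:ℝ) ≤ (((n₁ + k : ℕ) : ℝ) + 1) ^ Ru.domDeg :=
      one_le_pow₀ (by linarith [Nat.cast_nonneg (α := ℝ) (n₁ + k)])
    have e1 : CEu * α' ^ (n₁ + k) ≤ CEu
        * (α' ^ k * ((((n₁ + k : ℕ) : ℝ) + 1) ^ Ru.domDeg * ‖α‖ ^ n₁)) := by
      rw [pow_add]
      refine mul_le_mul_of_nonneg_left ?_ hCEu.le
      have g1 : α' ^ n₁ * α' ^ k = α' ^ k * (1 * α' ^ n₁) := by ring
      rw [g1]
      refine mul_le_mul_of_nonneg_left ?_ (pow_nonneg hα'0.le k)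
      exact mul_le_mul f4 f3 (pow_nonneg hα'0.le n₁) (le_trans zero_le_one f4)
    have e2 : 4 * CEu / (δu * cu) * ((α' / ‖α‖) ^ k
          * (δu * cu / 4 * ((((n₁ + k : ℕ) : ℝ) + 1) ^ Ru.domDeg
            * ‖α‖ ^ (n₁ + k))))
        = CEu * (α' ^ k * ((((n₁ + k : ℕ) : ℝ) + 1) ^ Ru.domDeg * ‖α‖ ^ n₁)) := by
      rw [div_pow, pow_add]
      field_simp
    calc CEu * α' ^ (n₁ + k) ≤ _ := e1
      _ = _ := e2.symm
      _ ≤ 4 * CEu / (δu * cu) * ((α' / ‖α‖) ^ k * ‖Y‖) := by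
          refine mul_le_mul_of_nonneg_left ?_ hK3.le
          exact mul_le_mul_of_nonneg_left hYa hαk
  -- term 2
  have hT2 : |(Rv.U m₁ : ℝ)|
      ≤ 2 * CUv / cv * ((β' / ‖β‖) ^ l * ‖Y‖) := by
    have f1 : ((m₁:ℝ) + 1) ^ Rv.domDeg ≤ (((m₁ + l : ℕ) : ℝ) + 1) ^ Rv.domDeg :=
      pow_le_pow_left₀ (by positivity) (by push_cast; linarith [Nat.cast_nonneg (α := ℝ) l]) _
    have f2 : (1:ℝ) ≤ β' ^ l := one_le_pow₀ hβ'1.le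
    have e1 : |(Rv.U m₁ : ℝ)| ≤ CUv
        * (β' ^ l * ((((m₁ + l : ℕ) : ℝ) + 1) ^ Rv.domDeg * ‖β‖ ^ m₁)) := by
      have g1 : ((m₁:ℝ) + 1) ^ Rv.domDeg * ‖β‖ ^ m₁
          ≤ β' ^ l * ((((m₁ + l : ℕ) : ℝ) + 1) ^ Rv.domDeg * ‖β‖ ^ m₁) := by
        have g2 : ((m₁:ℝ) + 1) ^ Rv.domDeg * ‖β‖ ^ m₁
            ≤ (((m₁ + l : ℕ) : ℝ) + 1) ^ Rv.domDeg * ‖β‖ ^ m₁ :=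
          mul_le_mul_of_nonneg_right f1 (pow_nonneg hb0.le _)
        have g3 := mul_le_mul f2 g2 (by positivity) (by positivity)
        rw [one_mul] at g3
        exact g3
      exact le_trans (hP2v m₁) (mul_le_mul_of_nonneg_left g1 hCUv.le)
    have e2 : 2 * CUv / cv * ((β' / ‖β‖) ^ l
          * (cv / 2 * ((((m₁ + l : ℕ) : ℝ) + 1) ^ Rv.domDeg * ‖β‖ ^ (m₁ + l))))
        = CUv * (β' ^ l * ((((m₁ + l : ℕ) : ℝ) + 1) ^ Rv.domDeg * ‖β‖ ^ m₁)) := by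
      rw [div_pow, pow_add]
      field_simp
    calc |(Rv.U m₁ : ℝ)| ≤ _ := e1
      _ = _ := e2.symm
      _ ≤ 2 * CUv / cv * ((β' / ‖β‖) ^ l * ‖Y‖) := by
          refine mul_le_mul_of_nonneg_left ?_ hK2.le
          exact mul_le_mul_of_nonneg_left hYb hβl
  -- term 4
  have hT4 : CEv * β' ^ (m₁ + l)
      ≤ 2 * CEv / cv * ((β' / ‖β‖) ^ l * ‖Y‖) := by
    have f3 : β' ^ m₁ ≤ ‖β‖ ^ m₁ := pow_le_pow_left₀ hβ'0.le hβ'2.le m₁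
    have f4 : (1:ℝ) ≤ (((m₁ + l : ℕ) : ℝ) + 1) ^ Rv.domDeg :=
      one_le_pow₀ (by linarith [Nat.cast_nonneg (α := ℝ) (m₁ + l)])
    have e1 : CEv * β' ^ (m₁ + l) ≤ CEv
        * (β' ^ l * ((((m₁ + l : ℕ) : ℝ) + 1) ^ Rv.domDeg * ‖β‖ ^ m₁)) := by
      rw [pow_add]
      refine mul_le_mul_of_nonneg_left ?_ hCEv.le
      have g1 : β' ^ m₁ * β' ^ l = β' ^ l * (1 * β' ^ m₁) := by ring
      rw [g1]
      refine mul_le_mul_of_nonneg_left ?_ (pow_nonneg hβ'0.le l)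
      exact mul_le_mul f4 f3 (pow_nonneg hβ'0.le m₁) (le_trans zero_le_one f4)
    have e2 : 2 * CEv / cv * ((β' / ‖β‖) ^ l
          * (cv / 2 * ((((m₁ + l : ℕ) : ℝ) + 1) ^ Rv.domDeg * ‖β‖ ^ (m₁ + l))))
        = CEv * (β' ^ l * ((((m₁ + l : ℕ) : ℝ) + 1) ^ Rv.domDeg * ‖β‖ ^ m₁)) := by
      rw [div_pow, pow_add]
      field_simp
    calc CEv * β' ^ (m₁ + l) ≤ _ := e1
      _ = _ := e2.symm
      _ ≤ 2 * CEv / cv * ((β' / ‖β‖) ^ l * ‖Y‖) := by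
          refine mul_le_mul_of_nonneg_left ?_ hK4.le
          exact mul_le_mul_of_nonneg_left hYb hβl
  -- decomposition of X - Y
  have heqC : (Ru.U (n₁ + k) : ℂ) - (Ru.U n₁ : ℂ) = (Rv.U (m₁ + l) : ℂ) - (Rv.U m₁ : ℂ) := by
    exact_mod_cast heq
  have hdecomp : X - Y = ((Ru.U n₁ : ℂ) - (Rv.U m₁ : ℂ))
      - ((Ru.U (n₁ + k) : ℂ) - X) + ((Rv.U (m₁ + l) : ℂ) - Y) := by
    linear_combination heqC
  have habs : ‖X - Y‖ ≤ |(Ru.U n₁ : ℝ)| + |(Rv.U m₁ : ℝ)|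
      + CEu * α' ^ (n₁ + k) + CEv * β' ^ (m₁ + l) := by
    have t1 : ‖(Ru.U n₁ : ℂ) - (Rv.U m₁ : ℂ)‖
        ≤ |(Ru.U n₁ : ℝ)| + |(Rv.U m₁ : ℝ)| := by
      refine le_trans (norm_sub_le _ _) ?_
      rw [Complex.norm_intCast, Complex.norm_intCast]
    have s1 : ‖((Ru.U n₁ : ℂ) - (Rv.U m₁ : ℂ)) - ((Ru.U (n₁ + k) : ℂ) - X)
          + ((Rv.U (m₁ + l) : ℂ) - Y)‖
        ≤ ‖((Ru.U n₁ : ℂ) - (Rv.U m₁ : ℂ)) - ((Ru.U (n₁ + k) : ℂ) - X)‖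
          + ‖(Rv.U (m₁ + l) : ℂ) - Y‖ := norm_add_le _ _
    have s2 : ‖((Ru.U n₁ : ℂ) - (Rv.U m₁ : ℂ)) - ((Ru.U (n₁ + k) : ℂ) - X)‖
        ≤ ‖(Ru.U n₁ : ℂ) - (Rv.U m₁ : ℂ)‖
          + ‖(Ru.U (n₁ + k) : ℂ) - X‖ := norm_sub_le _ _
    rw [hdecomp]
    linarith [t1, ht2, ht3, s1, s2]
  -- conclusion
  rw [div_sub_one hYne, norm_div, div_le_iff₀ hY0]
  set u := (4 * CUu / (δu * cu) + 4 * CEu / (δu * cu)) * (α' / ‖α‖) ^ k with hu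
  set v := (2 * CUv / cv + 2 * CEv / cv) * (β' / ‖β‖) ^ l with hv
  have hu0 : 0 ≤ u := mul_nonneg (by linarith) hαk
  have hv0 : 0 ≤ v := mul_nonneg (by linarith) hβl
  have hsum : ‖X - Y‖ ≤ (u + v) * ‖Y‖ := by
    have expand : (u + v) * ‖Y‖
        = 4 * CUu / (δu * cu) * ((α' / ‖α‖) ^ k * ‖Y‖)
          + 4 * CEu / (δu * cu) * ((α' / ‖α‖) ^ k * ‖Y‖)
          + (2 * CUv / cv * ((β' / ‖β‖) ^ l * ‖Y‖)
          + 2 * CEv / cv * ((β' / ‖β‖) ^ l * ‖Y‖)) := by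
      rw [hu, hv]
      ring
    rw [expand]
    linarith [hT1, hT2, hT3, hT4, habs]
  have hmm : u + v ≤ max (2 * u) (2 * v) := by
    rcases le_total u v with h | h
    · exact le_trans (by linarith) (le_max_right _ _)
    · exact le_trans (by linarith) (le_max_left _ _)
  have hfin : ‖X - Y‖ ≤ max (2 * u) (2 * v) * ‖Y‖ :=
    le_trans hsum (mul_le_mul_of_nonneg_right hmm hY0.le)
  have hmaxeq : max (2 * u) (2 * v)
      = max (2 * (4 * CUu / (δu * cu) + 4 * CEu / (δu * cu)) * (α' / ‖α‖) ^ k)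
          (2 * (2 * CUv / cv + 2 * CEv / cv) * (β' / ‖β‖) ^ l) := by
    rw [hu, hv]
    congr 1 <;> ring
  rw [hmaxeq] at hfin
  exact hfin
end

section
/- Set γ = |β|^{log α' / log |α|} and Γ = min{ |β|/β', |β|/γ }, so Γ > 1. There exist a constant C₄₀ > 0 and integers N, M such that every solution (n, m, n₁, m₁) of U_n − U_{n₁} = V_m − V_{m₁} with n > n₁ ≥ N₀, m > m₁ ≥ M₀, n ≥ N, m ≥ M satisfies b(m)·β^m − b(m₁)·β^{m₁} ≠ 0 and | (a(n)·α^n − a(n₁)·α^{n₁}) / (b(m)·β^m − b(m₁)·β^{m₁}) − 1 | ≤ C₄₀ · Γ^{−m}. -/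
open Polynomial

/-- `γ = |β|^(log α'/log |α|)` -/
noncomputable def gammaConst (α β : ℂ) (α' : ℝ) : ℝ :=
  ‖β‖ ^ (Real.log α' / Real.log (‖α‖))

/-- `Γ = min{|β|/β', |β|/γ}` -/
noncomputable def GammaConst (α β : ℂ) (α' β' : ℝ) : ℝ :=
  min (‖β‖ / β') (‖β‖ / gammaConst α β α')


section AuxLemmas

open Filter

/-- crude upper bound for polynomial evaluation at naturals -/
lemma eval_upper (p : ℂ[X]) : ∃ C : ℝ, 0 < C ∧ ∀ n : ℕ,
    ‖p.eval (n : ℂ)‖ ≤ C * ((n : ℝ) + 1) ^ p.natDegree := by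
  refine ⟨(∑ i ∈ Finset.range (p.natDegree + 1), ‖p.coeff i‖) + 1,
    by positivity, fun n => ?_⟩
  rw [Polynomial.eval_eq_sum_range]
  calc ‖∑ i ∈ Finset.range (p.natDegree + 1), p.coeff i * (n : ℂ) ^ i‖
      ≤ ∑ i ∈ Finset.range (p.natDegree + 1), ‖p.coeff i * (n : ℂ) ^ i‖ := by
        exact norm_sum_le _ _
    _ ≤ ∑ i ∈ Finset.range (p.natDegree + 1), ‖p.coeff i‖ * ((n:ℝ)+1) ^ p.natDegree := by
        apply Finset.sum_le_sum
        intro i hi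
        rw [Finset.mem_range] at hi
        rw [norm_mul, norm_pow]
        simp only [Complex.norm_natCast]
        have h1 : (n : ℝ) ^ i ≤ ((n:ℝ)+1) ^ p.natDegree := by
          calc (n:ℝ) ^ i ≤ ((n:ℝ)+1) ^ i := by
                apply pow_le_pow_left₀ (by positivity) (by linarith)
            _ ≤ ((n:ℝ)+1) ^ p.natDegree := by
                apply pow_le_pow_right₀ (by linarith) (by omega)
        exact mul_le_mul_of_nonneg_left h1 (norm_nonneg _)
    _ = (∑ i ∈ Finset.range (p.natDegree + 1), ‖p.coeff i‖) * ((n:ℝ)+1) ^ p.natDegree := by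
        rw [Finset.sum_mul]
    _ ≤ _ := by
        apply mul_le_mul_of_nonneg_right _ (by positivity)
        linarith

/-- asymptotic two-sided bound for |p(n)| in terms of the leading term -/
lemma eval_asymp (p : ℂ[X]) (hp : p ≠ 0) {ε : ℝ} (hε : 0 < ε) :
    ∃ N : ℕ, 1 ≤ N ∧ ∀ n : ℕ, N ≤ n →
      (1 - ε) * ‖p.leadingCoeff‖ * (n:ℝ) ^ p.natDegree ≤ ‖p.eval (n:ℂ)‖ ∧
      ‖p.eval (n:ℂ)‖ ≤ (1 + ε) * ‖p.leadingCoeff‖ * (n:ℝ) ^ p.natDegree := by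
  set d := p.natDegree with hd
  set L := ‖p.leadingCoeff‖ with hL
  have hL0 : 0 < L := by
    simpa [hL] using (norm_pos_iff.mpr (Polynomial.leadingCoeff_ne_zero.mpr hp))
  set S : ℝ := ∑ i ∈ Finset.range d, ‖p.coeff i‖ with hS
  clear_value S L d
  refine ⟨⌈S / (ε * L)⌉₊ + 1, by omega, fun n hn => ?_⟩
  have hn1 : (1:ℝ) ≤ (n:ℝ) := by exact_mod_cast Nat.one_le_iff_ne_zero.mpr (by omega)
  have hSn : S ≤ ε * L * n := by
    have h1 : S / (ε * L) ≤ (⌈S / (ε * L)⌉₊ : ℝ) := Nat.le_ceil _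
    have h2 : ((⌈S / (ε * L)⌉₊ : ℕ) : ℝ) ≤ (n : ℝ) := by exact_mod_cast le_trans (by omega) hn
    have := le_trans h1 h2
    calc S = S / (ε * L) * (ε * L) := by field_simp
      _ ≤ (n : ℝ) * (ε * L) := by
          apply mul_le_mul_of_nonneg_right this (by positivity)
      _ = ε * L * n := by ring
  have key : ‖p.eval (n:ℂ) - p.leadingCoeff * (n:ℂ) ^ d‖ ≤ ε * L * (n:ℝ) ^ d := by
    have heq : p.eval (n:ℂ) - p.leadingCoeff * (n:ℂ) ^ d
        = ∑ i ∈ Finset.range d, p.coeff i * (n:ℂ) ^ i := by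
      rw [hd, Polynomial.eval_eq_sum_range, Finset.sum_range_succ,
        Polynomial.coeff_natDegree]
      ring
    rw [heq]
    calc ‖∑ i ∈ Finset.range d, p.coeff i * (n:ℂ) ^ i‖
        ≤ ∑ i ∈ Finset.range d, ‖p.coeff i * (n:ℂ) ^ i‖ := norm_sum_le _ _
      _ ≤ ∑ i ∈ Finset.range d, ‖p.coeff i‖ * (n:ℝ) ^ (d - 1) := by
          apply Finset.sum_le_sum
          intro i hi
          rw [Finset.mem_range] at hi
          rw [norm_mul, norm_pow]
          simp only [Complex.norm_natCast]
          refine mul_le_mul_of_nonneg_left ?_ (norm_nonneg _)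
          exact pow_le_pow_right₀ hn1 (by omega)
      _ = S * (n:ℝ) ^ (d - 1) := by rw [hS, Finset.sum_mul]
      _ ≤ ε * L * (n:ℝ) ^ d := by
          rcases Nat.eq_zero_or_pos d with h0 | h0
          · subst h0
            simp only [Finset.range_zero, Finset.sum_empty, hS] at *
            simp
            positivity
          · obtain ⟨e, rfl⟩ : ∃ e, d = e + 1 := ⟨d - 1, by omega⟩
            have : (n:ℝ) ^ (e + 1) = (n:ℝ) * (n:ℝ) ^ e := by ring
            rw [this]
            have he : e + 1 - 1 = e := by omega
            rw [he]
            calc S * (n:ℝ) ^ e ≤ (ε * L * n) * (n:ℝ) ^ e :=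
                  mul_le_mul_of_nonneg_right hSn (by positivity)
              _ = ε * L * ((n:ℝ) * (n:ℝ) ^ e) := by ring
  have hsub : ∀ x y : ℂ, ‖x‖ - ‖y‖ ≤ ‖x - y‖ := fun x y => by
    simpa using norm_sub_norm_le x y
  have habs : ‖p.leadingCoeff * (n:ℂ) ^ d‖ = L * (n:ℝ) ^ d := by
    rw [norm_mul, norm_pow]
    simp [hL]
  constructor
  ·     -- |lc n^d| - |eval| ≤ |lc n^d - eval| = |eval - lc n^d| ≤ εLn^d
    have h3 : L * (n:ℝ)^d - ‖p.eval (n:ℂ)‖ ≤ ε * L * (n:ℝ)^d := by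
      have := hsub (p.leadingCoeff * (n:ℂ) ^ d) (p.eval (n:ℂ))
      rw [habs] at this
      calc L * (n:ℝ)^d - ‖p.eval (n:ℂ)‖
          ≤ ‖p.leadingCoeff * (n:ℂ) ^ d - p.eval (n:ℂ)‖ := this
        _ = ‖p.eval (n:ℂ) - p.leadingCoeff * (n:ℂ) ^ d‖ := by
            rw [← norm_neg]; ring_nf
        _ ≤ ε * L * (n:ℝ)^d := key
    nlinarith [norm_nonneg (p.eval (n:ℂ))]
  · have h4 : ‖p.eval (n:ℂ)‖ - L * (n:ℝ)^d ≤ ε * L * (n:ℝ)^d := by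
      have := hsub (p.eval (n:ℂ)) (p.leadingCoeff * (n:ℂ) ^ d)
      rw [habs] at this
      exact le_trans this key
    linarith

/-- polynomial times geometric is eventually small -/
lemma geom_poly_small {r : ℝ} (h0 : 0 ≤ r) (h1 : r < 1) (D : ℕ) {c : ℝ} (hc : 0 < c) :
    ∃ N : ℕ, ∀ n : ℕ, N ≤ n → ((n:ℝ) + 1) ^ D * r ^ n ≤ c := by
  have hs : Filter.Tendsto (fun n : ℕ => (n:ℝ) ^ D * r ^ n) Filter.atTop (nhds 0) := by
    have : Summable (fun n : ℕ => (n:ℝ) ^ D * r ^ n) := by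
      apply summable_pow_mul_geometric_of_norm_lt_one
      rwa [Real.norm_eq_abs, abs_of_nonneg h0]
    exact this.tendsto_atTop_zero
  have hev : ∀ᶠ n : ℕ in Filter.atTop, (n:ℝ) ^ D * r ^ n < c / 2 ^ D :=
    hs.eventually (gt_mem_nhds (by positivity))
  obtain ⟨N, hN⟩ := Filter.eventually_atTop.mp hev
  refine ⟨max N 1, fun n hn => ?_⟩
  have hn1 : 1 ≤ n := le_trans (le_max_right _ _) hn
  have hnN : N ≤ n := le_trans (le_max_left _ _) hn
  have h2 : ((n:ℝ) + 1) ^ D ≤ 2 ^ D * (n:ℝ) ^ D := by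
    rw [← mul_pow]
    apply pow_le_pow_left₀ (by positivity)
    have : (1:ℝ) ≤ (n:ℝ) := by exact_mod_cast hn1
    linarith
  calc ((n:ℝ) + 1) ^ D * r ^ n ≤ 2 ^ D * (n:ℝ) ^ D * r ^ n := by
        apply mul_le_mul_of_nonneg_right h2 (by positivity)
    _ = 2 ^ D * ((n:ℝ) ^ D * r ^ n) := by ring
    _ ≤ 2 ^ D * (c / 2 ^ D) := by
        apply mul_le_mul_of_nonneg_left (le_of_lt (hN n hnN)) (by positivity)
    _ = c := by field_simp

/-- abstract lemma: past terms of `f n · Aⁿ` are at most `θ` times the current term -/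
lemma past_small {f : ℕ → ℝ} (hf0 : ∀ n, 0 ≤ f n) {L ε θ A : ℝ} {d : ℕ}
    (hA : 1 < A) (hε0 : 0 < ε) (hε1 : ε < 1) (hθ0 : 0 < θ) (hθ1 : θ < 1) (hL0 : 0 < L)
    (hkey : 1 + ε ≤ θ * (1 - ε) * A)
    {Nε : ℕ} (hNε : ∀ n, Nε ≤ n → (1 - ε) * L * (n:ℝ)^d ≤ f n ∧ f n ≤ (1 + ε) * L * (n:ℝ)^d) :
    ∃ N : ℕ, 1 ≤ N ∧ ∀ n, N ≤ n → ∀ n₁, n₁ < n → f n₁ * A ^ n₁ ≤ θ * (f n * A ^ n) := by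
  have hA0 : (0:ℝ) < A := lt_trans one_pos hA
  have hc0 : 0 < θ * (1 - ε) * L := by
    apply mul_pos (mul_pos hθ0 (by linarith)) hL0
  set K : ℝ := (∑ j ∈ Finset.range Nε, f j * A ^ j) + 1 with hK
  have hK0 : 0 < K := by
    have : 0 ≤ ∑ j ∈ Finset.range Nε, f j * A ^ j :=
      Finset.sum_nonneg fun j _ => mul_nonneg (hf0 j) (by positivity)
    linarith
  obtain ⟨N₂, hN₂⟩ := pow_unbounded_of_one_lt (K / (θ * (1 - ε) * L)) hA
  refine ⟨max 1 (max Nε N₂), le_max_left _ _, fun n hn n₁ hn₁ => ?_⟩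
  have hnNε : Nε ≤ n := le_trans (le_max_left _ _) (le_trans (le_max_right _ _) hn)
  have hnN₂ : N₂ ≤ n := le_trans (le_max_right _ _) (le_trans (le_max_right _ _) hn)
  have hn1 : (1:ℝ) ≤ (n:ℝ) := by
    exact_mod_cast le_trans (le_max_left _ _) hn
  have hnd1 : (1:ℝ) ≤ (n:ℝ) ^ d := one_le_pow₀ hn1
  obtain ⟨hlo, hhi⟩ := hNε n hnNε
  have hmain : θ * ((1-ε) * L * (n:ℝ)^d * A ^ n) ≤ θ * (f n * A ^ n) := by
    apply mul_le_mul_of_nonneg_left _ hθ0.le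
    exact mul_le_mul_of_nonneg_right hlo (by positivity)
  rcases lt_or_ge n₁ Nε with hc1 | hc1
  · have h1 : f n₁ * A ^ n₁ ≤ K := by
      rw [hK]
      have := Finset.single_le_sum (f := fun j => f j * A ^ j)
        (fun j _ => mul_nonneg (hf0 j) (by positivity)) (Finset.mem_range.mpr hc1)
      linarith
    have h2 : K ≤ θ * (1-ε) * L * A ^ n := by
      have hle : A ^ N₂ ≤ A ^ n := pow_le_pow_right₀ hA.le hnN₂
      have h3 : K / (θ * (1 - ε) * L) ≤ A ^ n := le_trans hN₂.le hle
      rw [div_le_iff₀ hc0] at h3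
      linarith
    calc f n₁ * A ^ n₁ ≤ θ * (1-ε) * L * A ^ n := le_trans h1 h2
      _ ≤ θ * ((1-ε) * L * (n:ℝ)^d * A ^ n) := by
          have h4 : (1:ℝ) * ((1-ε) * L * A ^ n) ≤ (n:ℝ)^d * ((1-ε) * L * A ^ n) := by
            apply mul_le_mul_of_nonneg_right hnd1
            have : (0:ℝ) < (1-ε) * L * A ^ n := by
              apply mul_pos (mul_pos (by linarith) hL0) (by positivity)
            linarith
          nlinarith [hθ0.le]
      _ ≤ θ * (f n * A ^ n) := hmain
  · obtain ⟨hlo₁, hhi₁⟩ := hNε n₁ hc1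
    have hn₁d : (n₁:ℝ)^d ≤ (n:ℝ)^d := by
      apply pow_le_pow_left₀ (by positivity)
      exact_mod_cast hn₁.le
    have hApow : A ^ n₁ * A ≤ A ^ n := by
      calc A ^ n₁ * A = A ^ (n₁ + 1) := (pow_succ A n₁).symm
        _ ≤ A ^ n := pow_le_pow_right₀ hA.le (by omega)
    have hfn₁ : f n₁ ≤ (1+ε) * L * (n:ℝ)^d := by
      calc f n₁ ≤ (1+ε) * L * (n₁:ℝ)^d := hhi₁
        _ ≤ (1+ε) * L * (n:ℝ)^d := by
            apply mul_le_mul_of_nonneg_left hn₁d (by positivity)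
    have hstep : f n₁ * A ^ n₁ ≤ θ * ((1-ε) * L * (n:ℝ)^d) * (A ^ n₁ * A) := by
      have hLn : (0:ℝ) ≤ (1-ε) * L * (n:ℝ)^d := mul_nonneg (mul_nonneg (by linarith) hL0.le) (by positivity)
      calc f n₁ * A ^ n₁ ≤ ((1+ε) * L * (n:ℝ)^d) * A ^ n₁ :=
            mul_le_mul_of_nonneg_right hfn₁ (by positivity)
        _ ≤ (θ * (1-ε) * A * L * (n:ℝ)^d) * A ^ n₁ := by
            apply mul_le_mul_of_nonneg_right _ (by positivity)
            have : (1+ε) * (L * (n:ℝ)^d) ≤ (θ * (1-ε) * A) * (L * (n:ℝ)^d) := by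
              apply mul_le_mul_of_nonneg_right hkey (by positivity)
            nlinarith
        _ = θ * ((1-ε) * L * (n:ℝ)^d) * (A ^ n₁ * A) := by ring
    calc f n₁ * A ^ n₁ ≤ θ * ((1-ε) * L * (n:ℝ)^d) * (A ^ n₁ * A) := hstep
      _ ≤ θ * ((1-ε) * L * (n:ℝ)^d) * A ^ n := by
          apply mul_le_mul_of_nonneg_left hApow
          apply mul_nonneg hθ0.le
          apply mul_nonneg (mul_nonneg (by linarith) hL0.le) (by positivity)
      _ = θ * ((1-ε) * L * (n:ℝ)^d * A ^ n) := by ring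
      _ ≤ θ * (f n * A ^ n) := hmain

/-- two-sided bounds for the dominant binomial `p(n)αⁿ - p(n₁)α^{n₁}` -/
lemma term_bounds (p : ℂ[X]) (hp : p ≠ 0) (α : ℂ) (hα : 1 < ‖α‖) :
    ∃ c C : ℝ, 0 < c ∧ 0 < C ∧ ∃ N : ℕ, 1 ≤ N ∧ ∀ n : ℕ, N ≤ n → ∀ n₁ : ℕ, n₁ < n →
      c * ‖α‖ ^ n ≤ ‖p.eval (n:ℂ) * α ^ n - p.eval (n₁:ℂ) * α ^ n₁‖ ∧
      ‖p.eval (n:ℂ) * α ^ n - p.eval (n₁:ℂ) * α ^ n₁‖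
        ≤ C * ((n:ℝ) + 1) ^ p.natDegree * ‖α‖ ^ n := by
  have hA0 : (0:ℝ) < ‖α‖ := lt_trans one_pos hα
  have hL0 : 0 < ‖p.leadingCoeff‖ :=
    norm_pos_iff.mpr (Polynomial.leadingCoeff_ne_zero.mpr hp)
  set A := ‖α‖
  set L := ‖p.leadingCoeff‖
  set θ : ℝ := (1 + 1/A)/2 with hθdef
  have hθ0 : 0 < θ := by positivity
  have hθ1 : θ < 1 := by
    rw [hθdef, div_lt_one (by norm_num : (0:ℝ) < 2)]
    have : 1/A < 1 := by rw [div_lt_one hA0]; exact hα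
    linarith
  set ε : ℝ := (A - 1)/(A + 3) with hεdef
  have hε0 : 0 < ε := by rw [hεdef]; apply div_pos <;> linarith
  have hε1 : ε < 1 := by rw [hεdef, div_lt_one (by linarith)]; linarith
  have hkey : 1 + ε ≤ θ * (1 - ε) * A := by
    have heq : θ * (1 - ε) * A = 1 + ε := by
      rw [hθdef, hεdef]
      have h1 : (0:ℝ) < A + 3 := by linarith
      field_simp
      ring
    rw [heq]
  obtain ⟨Nε, hNε1, hNε⟩ := eval_asymp p hp hε0
  obtain ⟨N, hN1, hpast⟩ := past_small (f := fun n => ‖p.eval (n:ℂ)‖)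
    (fun n => norm_nonneg _) hα hε0 hε1 hθ0 hθ1 hL0 hkey (Nε := Nε) hNε
  refine ⟨(1-θ) * ((1-ε) * L), 2 * ((1+ε) * L),
    mul_pos (by linarith) (mul_pos (by linarith) hL0), by positivity,
    max N Nε, le_trans hN1 (le_max_left _ _), fun n hn n₁ hn₁ => ?_⟩
  have hpa := hpast n (le_trans (le_max_left _ _) hn) n₁ hn₁
  obtain ⟨hlo, hhi⟩ := hNε n (le_trans (le_max_right _ _) hn)
  have hn1 : (1:ℝ) ≤ (n:ℝ) := by
    have : 1 ≤ n := le_trans hN1 (le_trans (le_max_left _ _) hn)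
    exact_mod_cast this
  have hnd1 : (1:ℝ) ≤ (n:ℝ) ^ p.natDegree := one_le_pow₀ hn1
  have habs1 : ‖p.eval (n:ℂ) * α ^ n‖ = ‖p.eval (n:ℂ)‖ * A ^ n := by
    rw [norm_mul, norm_pow]
  have habs2 : ‖p.eval (n₁:ℂ) * α ^ n₁‖ = ‖p.eval (n₁:ℂ)‖ * A ^ n₁ := by
    rw [norm_mul, norm_pow]
  have hsub : ∀ x y : ℂ, ‖x‖ - ‖y‖ ≤ ‖x - y‖ := fun x y => by
    simpa using norm_sub_norm_le x y
  have hfn_lo : (1-ε) * L * (n:ℝ) ^ p.natDegree * A ^ n ≤ ‖p.eval (n:ℂ)‖ * A ^ n :=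
    mul_le_mul_of_nonneg_right hlo (by positivity)
  constructor
  · -- lower bound
    have h1 := hsub (p.eval (n:ℂ) * α ^ n) (p.eval (n₁:ℂ) * α ^ n₁)
    rw [habs1, habs2] at h1
    have h2 : (1 - θ) * (‖p.eval (n:ℂ)‖ * A ^ n)
        ≤ ‖p.eval (n:ℂ)‖ * A ^ n - ‖p.eval (n₁:ℂ)‖ * A ^ n₁ := by
      nlinarith
    have h3 : (1-θ) * ((1-ε) * L) * A ^ n ≤ (1 - θ) * (‖p.eval (n:ℂ)‖ * A ^ n) := by
      have h4 : (1-ε) * L * A ^ n ≤ (1-ε) * L * (n:ℝ) ^ p.natDegree * A ^ n := by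
        have : (1-ε) * L * 1 ≤ (1-ε) * L * (n:ℝ) ^ p.natDegree := by
          apply mul_le_mul_of_nonneg_left hnd1
          apply mul_nonneg (by linarith) hL0.le
        apply mul_le_mul_of_nonneg_right _ (by positivity)
        linarith
      have h5 : (1-ε) * L * A ^ n ≤ ‖p.eval (n:ℂ)‖ * A ^ n := le_trans h4 hfn_lo
      nlinarith
    linarith
  · -- upper bound
    have h1 : ‖p.eval (n:ℂ) * α ^ n - p.eval (n₁:ℂ) * α ^ n₁‖
        ≤ ‖p.eval (n:ℂ)‖ * A ^ n + ‖p.eval (n₁:ℂ)‖ * A ^ n₁ := by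
      calc ‖p.eval (n:ℂ) * α ^ n - p.eval (n₁:ℂ) * α ^ n₁‖
          ≤ ‖p.eval (n:ℂ) * α ^ n‖ + ‖p.eval (n₁:ℂ) * α ^ n₁‖ :=
            by simpa using
              norm_sub_le (p.eval (n:ℂ) * α ^ n) (p.eval (n₁:ℂ) * α ^ n₁)
        _ = _ := by rw [habs1, habs2]
    have h2 : ‖p.eval (n:ℂ)‖ * A ^ n + ‖p.eval (n₁:ℂ)‖ * A ^ n₁
        ≤ 2 * (‖p.eval (n:ℂ)‖ * A ^ n) := by
          nlinarith [hpa, mul_nonneg (norm_nonneg (p.eval (n:ℂ))) (pow_nonneg hA0.le n)]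
    have h3 : ‖p.eval (n:ℂ)‖ * A ^ n ≤ (1+ε) * L * ((n:ℝ)+1) ^ p.natDegree * A ^ n := by
      apply mul_le_mul_of_nonneg_right _ (by positivity)
      calc ‖p.eval (n:ℂ)‖ ≤ (1+ε) * L * (n:ℝ) ^ p.natDegree := hhi
        _ ≤ (1+ε) * L * ((n:ℝ)+1) ^ p.natDegree := by
            apply mul_le_mul_of_nonneg_left _ (by positivity)
            apply pow_le_pow_left₀ (by positivity)
            linarith
    calc ‖p.eval (n:ℂ) * α ^ n - p.eval (n₁:ℂ) * α ^ n₁‖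
        ≤ 2 * (‖p.eval (n:ℂ)‖ * A ^ n) := le_trans h1 h2
      _ ≤ 2 * ((1+ε) * L * ((n:ℝ)+1) ^ p.natDegree * A ^ n) := by
          apply mul_le_mul_of_nonneg_left h3 (by norm_num)
      _ = 2 * ((1+ε) * L) * ((n:ℝ)+1) ^ p.natDegree * A ^ n := by ring


/-- bound on the non-dominant part of a linear recurrence sequence -/
lemma error_bound (R : LinRecSeq) {α' : ℝ} (h1 : 1 < α')
    (hroots : ∀ i, i ≠ R.i0 → ‖R.root i‖ < α') :
    ∃ C : ℝ, 0 < C ∧ ∃ D : ℕ, ∃ α₁ : ℝ, 1 ≤ α₁ ∧ α₁ < α' ∧ ∀ n : ℕ,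
      ‖(R.U n : ℂ) - R.domPoly.eval (n:ℂ) * R.root R.i0 ^ n‖
        ≤ C * ((n:ℝ)+1) ^ D * α₁ ^ n := by
  classical
  set s : Finset (Fin R.t) := Finset.univ.erase R.i0 with hs
  have hex : ∃ x : ℝ, 1 ≤ x ∧ x < α' ∧ ∀ i ∈ s, ‖R.root i‖ ≤ x := by
    rcases s.eq_empty_or_nonempty with he | hne
    · exact ⟨1, le_refl _, h1, by rw [he]; simp⟩
    · refine ⟨max 1 (s.sup' hne fun i => ‖R.root i‖), le_max_left _ _, ?_, ?_⟩
      · apply max_lt h1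
        rw [Finset.sup'_lt_iff]
        intro i hi
        exact hroots i (Finset.ne_of_mem_erase hi)
      · intro i hi
        exact le_trans (Finset.le_sup' (fun i => ‖R.root i‖) hi) (le_max_right _ _)
  obtain ⟨α₁, hα₁1, hα₁lt, hα₁b⟩ := hex
  have hα₁0 : (0:ℝ) < α₁ := lt_of_lt_of_le one_pos hα₁1
  choose Cf hCf0 hCfb using fun i : Fin R.t => eval_upper (R.a i)
  set D := Finset.univ.sup fun i : Fin R.t => (R.a i).natDegree with hD
  have hsum0 : 0 ≤ ∑ i ∈ s, Cf i := Finset.sum_nonneg fun i _ => (hCf0 i).le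
  refine ⟨(∑ i ∈ s, Cf i) + 1, by linarith, D, α₁, hα₁1, hα₁lt, fun n => ?_⟩
  have hform : (R.U n : ℂ) - R.domPoly.eval (n:ℂ) * R.root R.i0 ^ n
      = ∑ i ∈ s, (R.a i).eval (n:ℂ) * R.root i ^ n := by
    rw [R.formula n, LinRecSeq.domPoly, hs]
    rw [← Finset.sum_erase_add _ _ (Finset.mem_univ R.i0)]
    ring
  rw [hform]
  have hn1 : (0:ℝ) ≤ (n:ℝ) + 1 := by positivity
  calc ‖∑ i ∈ s, (R.a i).eval (n:ℂ) * R.root i ^ n‖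
      ≤ ∑ i ∈ s, ‖(R.a i).eval (n:ℂ) * R.root i ^ n‖ := norm_sum_le _ _
    _ ≤ ∑ i ∈ s, Cf i * ((n:ℝ)+1) ^ D * α₁ ^ n := by
        apply Finset.sum_le_sum
        intro i hi
        rw [norm_mul, norm_pow]
        have h1 : ‖(R.a i).eval (n:ℂ)‖ ≤ Cf i * ((n:ℝ)+1) ^ D := by
          calc ‖(R.a i).eval (n:ℂ)‖ ≤ Cf i * ((n:ℝ)+1) ^ (R.a i).natDegree :=
                hCfb i n
            _ ≤ Cf i * ((n:ℝ)+1) ^ D := by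
                apply mul_le_mul_of_nonneg_left _ (hCf0 i).le
                apply pow_le_pow_right₀ (by linarith)
                exact Finset.le_sup (f := fun i : Fin R.t => (R.a i).natDegree) (Finset.mem_univ i)
        have h2 : ‖R.root i‖ ^ n ≤ α₁ ^ n :=
          pow_le_pow_left₀ (norm_nonneg _) (hα₁b i hi) n
        calc ‖(R.a i).eval (n:ℂ)‖ * ‖R.root i‖ ^ n
            ≤ (Cf i * ((n:ℝ)+1) ^ D) * α₁ ^ n := by
              apply mul_le_mul h1 h2 (pow_nonneg (norm_nonneg _) n) (mul_nonneg (hCf0 i).le (by positivity))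
          _ = Cf i * ((n:ℝ)+1) ^ D * α₁ ^ n := by ring
    _ = (∑ i ∈ s, Cf i) * ((n:ℝ)+1) ^ D * α₁ ^ n := by
        rw [← Finset.sum_mul, ← Finset.sum_mul]
    _ ≤ ((∑ i ∈ s, Cf i) + 1) * ((n:ℝ)+1) ^ D * α₁ ^ n := by
        have : (0:ℝ) ≤ ((n:ℝ)+1) ^ D * α₁ ^ n := by positivity
        nlinarith

end AuxLemmas

set_option maxHeartbeats 3200000 in
/-- **Final approximation.** With `γ = |β|^(log α'/log|α|)` and `Γ = min{|β|/β', |β|/γ}`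
one has `Γ > 1`, and there are a constant `C₄₀ > 0` and integers `N, M` such that every
solution `(n, m, n₁, m₁)` of `U n − U n₁ = V m − V m₁` with `n > n₁ ≥ N₀`, `m > m₁ ≥ M₀`,
`n ≥ N`, `m ≥ M` satisfies `b(m)βᵐ − b(m₁)β^{m₁} ≠ 0` and
`|(a(n)αⁿ − a(n₁)α^{n₁})/(b(m)βᵐ − b(m₁)β^{m₁}) − 1| ≤ C₄₀·Γ^(−m)`. -/
theorem final_approximation (Ru Rv : LinRecSeq) (α β : ℂ)
    (hU : Ru.HasDomRoot α) (hV : Rv.HasDomRoot β)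
    (hindep : MultIndep α β)
    (hβ1 : 1 < ‖β‖) (hβα : ‖β‖ < ‖α‖)
    (N₀ M₀ : ℕ)
    (hUmono : ∀ n : ℕ, N₀ ≤ n → 0 < |Ru.U n| ∧ |Ru.U n| < |Ru.U (n + 1)|)
    (hVmono : ∀ m : ℕ, M₀ ≤ m → 0 < |Rv.U m| ∧ |Rv.U m| < |Rv.U (m + 1)|)
    (α' β' : ℝ)
    (hα'1 : 1 < α') (hα'2 : α' < ‖α‖)
    (hα'3 : ∀ i, i ≠ Ru.i0 → ‖Ru.root i‖ < α')
    (hβ'1 : 1 < β') (hβ'2 : β' < ‖β‖)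
    (hβ'3 : ∀ i, i ≠ Rv.i0 → ‖Rv.root i‖ < β') :
    1 < GammaConst α β α' β' ∧
    ∃ C₄₀ : ℝ, 0 < C₄₀ ∧ ∃ N M : ℕ,
      ∀ n m n₁ m₁ : ℕ, N₀ ≤ n₁ → n₁ < n → M₀ ≤ m₁ → m₁ < m → N ≤ n → M ≤ m →
        Ru.U n - Ru.U n₁ = Rv.U m - Rv.U m₁ →
        (Rv.domPoly.eval (m : ℂ) * β ^ m - Rv.domPoly.eval (m₁ : ℂ) * β ^ m₁ ≠ 0) ∧
        ‖(Ru.domPoly.eval (n : ℂ) * α ^ n - Ru.domPoly.eval (n₁ : ℂ) * α ^ n₁) /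
            (Rv.domPoly.eval (m : ℂ) * β ^ m - Rv.domPoly.eval (m₁ : ℂ) * β ^ m₁) - 1‖
          ≤ C₄₀ * GammaConst α β α' β' ^ (-(m : ℝ)) := by
  obtain ⟨A, hAdef⟩ : ∃ x : ℝ, x = ‖α‖ := ⟨_, rfl⟩
  obtain ⟨B, hBdef⟩ : ∃ x : ℝ, x = ‖β‖ := ⟨_, rfl⟩
  rw [← hAdef] at hβα hα'2
  rw [← hBdef] at hβ1 hβα hβ'2
  have hA1 : 1 < A := lt_trans hβ1 hβα
  have hA0 : (0:ℝ) < A := lt_trans one_pos hA1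
  have hB0 : (0:ℝ) < B := lt_trans one_pos hβ1
  have hα'0 : (0:ℝ) < α' := lt_trans one_pos hα'1
  have hβ'0 : (0:ℝ) < β' := lt_trans one_pos hβ'1
  have hAne : A ≠ 0 := ne_of_gt hA0
  have hBne : B ≠ 0 := ne_of_gt hB0
  have hα'ne : α' ≠ 0 := ne_of_gt hα'0
  have hβ'ne : β' ≠ 0 := ne_of_gt hβ'0
  have hlogA : 0 < Real.log A := Real.log_pos hA1
  have hlogα' : 0 < Real.log α' := Real.log_pos hα'1
  have hlogB : 0 < Real.log B := Real.log_pos hβ1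
  obtain ⟨κ, hκdef⟩ : ∃ x : ℝ, x = Real.log α' / Real.log A := ⟨_, rfl⟩
  have hκ0 : 0 < κ := by rw [hκdef]; exact div_pos hlogα' hlogA
  have hκ1 : κ < 1 := by
    rw [hκdef, div_lt_one hlogA]
    exact Real.log_lt_log hα'0 hα'2
  obtain ⟨γ, hγ⟩ : ∃ x : ℝ, x = B ^ κ := ⟨_, rfl⟩
  have hγ0 : 0 < γ := by rw [hγ]; exact Real.rpow_pos_of_pos hB0 κ
  have hγne : γ ≠ 0 := ne_of_gt hγ0
  have hγB : γ < B := by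
    rw [hγ]
    calc B ^ κ < B ^ (1:ℝ) := Real.rpow_lt_rpow_of_exponent_lt hβ1 hκ1
      _ = B := Real.rpow_one B
  have hγ1 : 1 ≤ γ := by
    rw [hγ]
    calc (1:ℝ) = B ^ (0:ℝ) := (Real.rpow_zero B).symm
      _ ≤ B ^ κ := Real.rpow_le_rpow_of_exponent_le hβ1.le hκ0.le
  have hγc : gammaConst α β α' = γ := by
    unfold gammaConst
    rw [hγ, hκdef, hAdef, hBdef]
  have hΓc : GammaConst α β α' β' = min (B/β') (B/γ) := by
    unfold GammaConst
    rw [hγc, ← hBdef]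
  have hΓ1 : 1 < GammaConst α β α' β' := by
    rw [hΓc, lt_min_iff]
    constructor
    · rw [lt_div_iff₀ hβ'0]
      simpa using hβ'2
    · rw [lt_div_iff₀ hγ0]
      simpa using hγB
  refine ⟨hΓ1, ?_⟩
  obtain ⟨Γ, hΓdef⟩ : ∃ x : ℝ, x = GammaConst α β α' β' := ⟨_, rfl⟩
  rw [← hΓdef]
  have hΓ1' : 1 < Γ := by rw [hΓdef]; exact hΓ1
  have hΓ0 : 0 < Γ := lt_trans one_pos hΓ1'
  have hΓm : Γ = min (B/β') (B/γ) := by rw [hΓdef, hΓc]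
  -- helper for rpow/pow exchange
  have pow_rpow : ∀ (x : ℝ), 0 < x → ∀ (k : ℕ) (y : ℝ), (x ^ k) ^ y = (x ^ y) ^ k := by
    intro x hx k y
    rw [← Real.rpow_natCast x k, ← Real.rpow_mul hx.le, mul_comm,
      Real.rpow_mul hx.le, Real.rpow_natCast]
  have hAκ : A ^ κ = α' := by
    rw [Real.rpow_def_of_pos hA0, hκdef]
    rw [mul_comm, div_mul_cancel₀ _ (ne_of_gt hlogA)]
    exact Real.exp_log hα'0
  -- triangle helpers
  have tri : ∀ x y : ℂ, ‖x‖ ≤ ‖y‖ + ‖x - y‖ := by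
    intro x y
    have h := norm_add_le y (x - y)
    rwa [show y + (x - y) = x by ring] at h
  have trisub : ∀ x y : ℂ, ‖x - y‖ ≤ ‖x‖ + ‖y‖ := by
    intro x y
    simpa using norm_sub_le x y
  -- dominant term bounds
  have hUa : Ru.domPoly ≠ 0 := Ru.a_ne Ru.i0
  have hVb : Rv.domPoly ≠ 0 := Rv.a_ne Rv.i0
  obtain ⟨cA, CA, hcA, hCA, NA, hNA1, hTA⟩ := term_bounds Ru.domPoly hUa α (hAdef ▸ hA1)
  obtain ⟨cB, CB, hcB, hCB, MB, hMB1, hTB⟩ := term_bounds Rv.domPoly hVb β (hBdef ▸ hβ1)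
  rw [← hAdef] at hTA
  rw [← hBdef] at hTB
  have hcAne : cA ≠ 0 := ne_of_gt hcA
  have hcBne : cB ≠ 0 := ne_of_gt hcB
  -- error bounds
  obtain ⟨CE, hCE, DE, α₁, hα₁1, hα₁lt, hEU'⟩ := error_bound Ru hα'1 hα'3
  obtain ⟨CF, hCF, DF, β₁, hβ₁1, hβ₁lt, hEV'⟩ := error_bound Rv hβ'1 hβ'3
  rw [hU.1] at hEU'
  rw [hV.1] at hEV'
  have hCEne : CE ≠ 0 := ne_of_gt hCE
  have hCFne : CF ≠ 0 := ne_of_gt hCF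
  have hα₁0 : (0:ℝ) < α₁ := lt_of_lt_of_le one_pos hα₁1
  have hβ₁0 : (0:ℝ) < β₁ := lt_of_lt_of_le one_pos hβ₁1
  have hα₁A : α₁ < A := lt_trans hα₁lt hα'2
  have hβ₁B : β₁ < B := lt_trans hβ₁lt hβ'2
  -- derived constants
  obtain ⟨C₁, hC₁⟩ : ∃ x : ℝ, x = CB + 2*CF := ⟨_, rfl⟩
  have hC₁0 : 0 < C₁ := by rw [hC₁]; positivity
  obtain ⟨D₁, hD₁⟩ : ∃ x : ℕ, x = max Rv.domPoly.natDegree DF := ⟨_, rfl⟩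
  have hτD₁ : Rv.domPoly.natDegree ≤ D₁ := by rw [hD₁]; exact le_max_left _ _
  have hDFD₁ : DF ≤ D₁ := by rw [hD₁]; exact le_max_right _ _
  obtain ⟨C₂, hC₂⟩ : ∃ x : ℝ, x = max 1 (2*C₁/cA) := ⟨_, rfl⟩
  have hC₂1 : (1:ℝ) ≤ C₂ := by rw [hC₂]; exact le_max_left _ _
  have hC₂b : 2*C₁/cA ≤ C₂ := by rw [hC₂]; exact le_max_right _ _
  have hC₂0 : (0:ℝ) < C₂ := lt_of_lt_of_le one_pos hC₂1
  obtain ⟨D₂, hD₂⟩ : ∃ x : ℕ, x = max Ru.domPoly.natDegree DE := ⟨_, rfl⟩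
  have hσD₂ : Ru.domPoly.natDegree ≤ D₂ := by rw [hD₂]; exact le_max_left _ _
  have hDED₂ : DE ≤ D₂ := by rw [hD₂]; exact le_max_right _ _
  obtain ⟨C₄, hC₄⟩ : ∃ x : ℝ, x = max 1 (2*(CA + 2*CE)/cB) := ⟨_, rfl⟩
  have hC₄1 : (1:ℝ) ≤ C₄ := by rw [hC₄]; exact le_max_left _ _
  have hC₄b : 2*(CA + 2*CE)/cB ≤ C₄ := by rw [hC₄]; exact le_max_right _ _
  have hC₄0 : (0:ℝ) < C₄ := lt_of_lt_of_le one_pos hC₄1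
  have hlogC₄ : 0 ≤ Real.log C₄ := Real.log_nonneg hC₄1
  obtain ⟨C₅, hC₅⟩ : ∃ x : ℝ, x = Real.log C₄ + D₂ + Real.log A := ⟨_, rfl⟩
  have hC₅0 : 0 < C₅ := by rw [hC₅]; positivity
  obtain ⟨C₇, hC₇⟩ : ∃ x : ℝ, x = C₅ / Real.log B + 1 := ⟨_, rfl⟩
  have hC₇1 : (1:ℝ) ≤ C₇ := by
    rw [hC₇]
    have : 0 ≤ C₅ / Real.log B := le_of_lt (div_pos hC₅0 hlogB)
    linarith
  have hC₇0 : (0:ℝ) < C₇ := lt_of_lt_of_le one_pos hC₇1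
  -- thresholds
  obtain ⟨N₂, hN₂⟩ := geom_poly_small (r := α₁/A) (by positivity)
    ((div_lt_one hA0).mpr hα₁A) DE (c := cA/(4*CE)) (by positivity)
  obtain ⟨M₂, hM₂⟩ := geom_poly_small (r := β₁/B) (by positivity)
    ((div_lt_one hB0).mpr hβ₁B) DF (c := cB/(4*CF)) (by positivity)
  obtain ⟨M₃, hM₃⟩ := geom_poly_small (r := β₁/β') (by positivity)
    ((div_lt_one hβ'0).mpr hβ₁lt) DF (c := 1) one_pos
  obtain ⟨N₃, hN₃⟩ := geom_poly_small (r := α₁/α') (by positivity)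
    ((div_lt_one hα'0).mpr hα₁lt) (DE + D₁)
    (c := 1/(2*CE*C₂*C₇^D₁)) (by positivity)
  refine ⟨(1 + 2*CF)/cB, by positivity, max NA (max N₂ N₃), max MB (max M₂ M₃),
    fun n m n₁ m₁ hn₁0 hn₁ hm₁0 hm₁ hnN hmM hsol => ?_⟩
  have hnNA : NA ≤ n := le_trans (le_max_left _ _) hnN
  have hnN₂ : N₂ ≤ n := le_trans (le_trans (le_max_left _ _) (le_max_right _ _)) hnN
  have hnN₃ : N₃ ≤ n := le_trans (le_trans (le_max_right _ _) (le_max_right _ _)) hnN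
  have hmMB : MB ≤ m := le_trans (le_max_left _ _) hmM
  have hmM₂ : M₂ ≤ m := le_trans (le_trans (le_max_left _ _) (le_max_right _ _)) hmM
  have hmM₃ : M₃ ≤ m := le_trans (le_trans (le_max_right _ _) (le_max_right _ _)) hmM
  obtain ⟨hTAlo, hTAhi⟩ := hTA n hnNA n₁ hn₁
  obtain ⟨hTBlo, hTBhi⟩ := hTB m hmMB m₁ hm₁
  obtain ⟨TA, hTAdef⟩ : ∃ x : ℂ,
      x = Ru.domPoly.eval (n:ℂ) * α ^ n - Ru.domPoly.eval (n₁:ℂ) * α ^ n₁ := ⟨_, rfl⟩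
  obtain ⟨TB, hTBdef⟩ : ∃ x : ℂ,
      x = Rv.domPoly.eval (m:ℂ) * β ^ m - Rv.domPoly.eval (m₁:ℂ) * β ^ m₁ := ⟨_, rfl⟩
  rw [← hTAdef] at hTAlo hTAhi
  rw [← hTBdef] at hTBlo hTBhi
  rw [← hTAdef, ← hTBdef]
  have hTBpos : 0 < ‖TB‖ := lt_of_lt_of_le (by positivity) hTBlo
  have hTBne : TB ≠ 0 := by
    intro h
    rw [h] at hTBpos
    simp at hTBpos
  refine ⟨hTBne, ?_⟩
  -- the error difference
  have hsolC : ((Ru.U n : ℂ)) - (Ru.U n₁ : ℂ) = (Rv.U m : ℂ) - (Rv.U m₁ : ℂ) := by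
    have := congrArg (fun z : ℤ => (z : ℂ)) hsol
    push_cast at this
    exact this
  have hdiff : TA - TB = (((Rv.U m : ℂ) - Rv.domPoly.eval (m:ℂ) * β ^ m)
        - ((Rv.U m₁ : ℂ) - Rv.domPoly.eval (m₁:ℂ) * β ^ m₁))
      - (((Ru.U n : ℂ) - Ru.domPoly.eval (n:ℂ) * α ^ n)
        - ((Ru.U n₁ : ℂ) - Ru.domPoly.eval (n₁:ℂ) * α ^ n₁)) := by
    rw [hTAdef, hTBdef]
    linear_combination hsolC
  have hn1R : (1:ℝ) ≤ (n:ℝ) := by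
    have : (1:ℕ) ≤ n := le_trans hNA1 hnNA
    exact_mod_cast this
  have hm1R : (1:ℝ) ≤ (m:ℝ) := by
    have : (1:ℕ) ≤ m := le_trans hMB1 hmMB
    exact_mod_cast this
  have hm1pow : (1:ℝ) ≤ ((m:ℝ)+1) := by linarith
  have hn1pow : (1:ℝ) ≤ ((n:ℝ)+1) := by linarith
  -- error magnitude bounds
  obtain ⟨EUb, hEUb⟩ : ∃ x : ℝ, x = 2*CE*((n:ℝ)+1)^DE*α₁^n := ⟨_, rfl⟩
  obtain ⟨EVb, hEVb⟩ : ∃ x : ℝ, x = 2*CF*((m:ℝ)+1)^DF*β₁^m := ⟨_, rfl⟩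
  have hEUb0 : 0 ≤ EUb := by rw [hEUb]; positivity
  have hEVb0 : 0 ≤ EVb := by rw [hEVb]; positivity
  have hmono : ∀ (C x : ℝ) (D : ℕ), 1 ≤ x → 0 < C → ∀ (k j : ℕ), j ≤ k →
      C*((j:ℝ)+1)^D*x^j ≤ C*((k:ℝ)+1)^D*x^k := by
    intro C x D x1 hC k j hjk
    have hj : ((j:ℝ)+1)^D ≤ ((k:ℝ)+1)^D := by
      apply pow_le_pow_left₀ (by positivity)
      have : (j:ℝ) ≤ (k:ℝ) := by exact_mod_cast hjk
      linarith
    have hx : x^j ≤ x^k := pow_le_pow_right₀ x1 hjk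
    have h0x : (0:ℝ) < x := lt_of_lt_of_le one_pos x1
    calc C*((j:ℝ)+1)^D*x^j ≤ C*((k:ℝ)+1)^D*x^j := by
          apply mul_le_mul_of_nonneg_right _ (by positivity)
          exact mul_le_mul_of_nonneg_left hj hC.le
      _ ≤ C*((k:ℝ)+1)^D*x^k := by
          apply mul_le_mul_of_nonneg_left hx
          positivity
  have hEUdiff : ‖((Ru.U n : ℂ) - Ru.domPoly.eval (n:ℂ) * α ^ n)
      - ((Ru.U n₁ : ℂ) - Ru.domPoly.eval (n₁:ℂ) * α ^ n₁)‖ ≤ EUb := by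
    calc ‖((Ru.U n : ℂ) - Ru.domPoly.eval (n:ℂ) * α ^ n)
        - ((Ru.U n₁ : ℂ) - Ru.domPoly.eval (n₁:ℂ) * α ^ n₁)‖
        ≤ ‖(Ru.U n : ℂ) - Ru.domPoly.eval (n:ℂ) * α ^ n‖
          + ‖(Ru.U n₁ : ℂ) - Ru.domPoly.eval (n₁:ℂ) * α ^ n₁‖ := trisub _ _
      _ ≤ CE*((n:ℝ)+1)^DE*α₁^n + CE*((n₁:ℝ)+1)^DE*α₁^n₁ := add_le_add (hEU' n) (hEU' n₁)
      _ ≤ CE*((n:ℝ)+1)^DE*α₁^n + CE*((n:ℝ)+1)^DE*α₁^n := by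
          have := hmono CE α₁ DE hα₁1 hCE n n₁ hn₁.le
          linarith
      _ = EUb := by rw [hEUb]; ring
  have hEVdiff : ‖((Rv.U m : ℂ) - Rv.domPoly.eval (m:ℂ) * β ^ m)
      - ((Rv.U m₁ : ℂ) - Rv.domPoly.eval (m₁:ℂ) * β ^ m₁)‖ ≤ EVb := by
    calc ‖((Rv.U m : ℂ) - Rv.domPoly.eval (m:ℂ) * β ^ m)
        - ((Rv.U m₁ : ℂ) - Rv.domPoly.eval (m₁:ℂ) * β ^ m₁)‖
        ≤ ‖(Rv.U m : ℂ) - Rv.domPoly.eval (m:ℂ) * β ^ m‖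
          + ‖(Rv.U m₁ : ℂ) - Rv.domPoly.eval (m₁:ℂ) * β ^ m₁‖ := trisub _ _
      _ ≤ CF*((m:ℝ)+1)^DF*β₁^m + CF*((m₁:ℝ)+1)^DF*β₁^m₁ := add_le_add (hEV' m) (hEV' m₁)
      _ ≤ CF*((m:ℝ)+1)^DF*β₁^m + CF*((m:ℝ)+1)^DF*β₁^m := by
          have := hmono CF β₁ DF hβ₁1 hCF m m₁ hm₁.le
          linarith
      _ = EVb := by rw [hEVb]; ring
  have hdiffabs : ‖TA - TB‖ ≤ EUb + EVb := by
    rw [hdiff]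
    calc ‖_‖ ≤ _ + _ := trisub _ _
      _ ≤ EVb + EUb := add_le_add hEVdiff hEUdiff
      _ = EUb + EVb := add_comm _ _
  -- small error vs dominant bounds
  have hEUb_half : EUb ≤ (cA/2) * A^n := by
    have h := hN₂ n hnN₂
    have hpow : α₁^n = (α₁/A)^n * A^n := by
      rw [div_pow]
      field_simp
    rw [hEUb, hpow]
    calc 2*CE*((n:ℝ)+1)^DE*((α₁/A)^n * A^n)
        = 2*CE*(((n:ℝ)+1)^DE*(α₁/A)^n) * A^n := by ring
      _ ≤ 2*CE*(cA/(4*CE)) * A^n := by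
          apply mul_le_mul_of_nonneg_right _ (by positivity)
          exact mul_le_mul_of_nonneg_left h (by positivity)
      _ = (cA/2) * A^n := by
          field_simp
          ring
  have hEVb_half : EVb ≤ (cB/2) * B^m := by
    have h := hM₂ m hmM₂
    have hpow : β₁^m = (β₁/B)^m * B^m := by
      rw [div_pow]
      field_simp
    rw [hEVb, hpow]
    calc 2*CF*((m:ℝ)+1)^DF*((β₁/B)^m * B^m)
        = 2*CF*(((m:ℝ)+1)^DF*(β₁/B)^m) * B^m := by ring
      _ ≤ 2*CF*(cB/(4*CF)) * B^m := by
          apply mul_le_mul_of_nonneg_right _ (by positivity)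
          exact mul_le_mul_of_nonneg_left h (by positivity)
      _ = (cB/2) * B^m := by
          field_simp
          ring
  -- Step I : A^n ≤ C₂ (m+1)^{D₁} B^m
  have hStepI : A^n ≤ C₂ * ((m:ℝ)+1)^D₁ * B^m := by
    have h1 : cA * A^n ≤ ‖TB‖ + (EUb + EVb) := by
      have h2 := tri TA TB
      linarith [hdiffabs, hTAlo]
    have h3 : EVb ≤ 2*CF*((m:ℝ)+1)^D₁*B^m := by
      rw [hEVb]
      have hβ₁m : β₁^m ≤ B^m := pow_le_pow_left₀ hβ₁0.le hβ₁B.le m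
      have hmD : ((m:ℝ)+1)^DF ≤ ((m:ℝ)+1)^D₁ := pow_le_pow_right₀ hm1pow hDFD₁
      calc 2*CF*((m:ℝ)+1)^DF*β₁^m ≤ 2*CF*((m:ℝ)+1)^D₁*β₁^m := by
            apply mul_le_mul_of_nonneg_right _ (by positivity)
            exact mul_le_mul_of_nonneg_left hmD (by positivity)
        _ ≤ 2*CF*((m:ℝ)+1)^D₁*B^m := by
            apply mul_le_mul_of_nonneg_left hβ₁m (by positivity)
    have h4 : ‖TB‖ ≤ CB*((m:ℝ)+1)^D₁*B^m := by
      calc ‖TB‖ ≤ CB*((m:ℝ)+1)^Rv.domPoly.natDegree*B^m := hTBhi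
        _ ≤ CB*((m:ℝ)+1)^D₁*B^m := by
            apply mul_le_mul_of_nonneg_right _ (by positivity)
            apply mul_le_mul_of_nonneg_left _ hCB.le
            exact pow_le_pow_right₀ hm1pow hτD₁
    have h5 : (cA/2) * A^n ≤ C₁*((m:ℝ)+1)^D₁*B^m := by
      have h6 := hEUb_half
      have hC₁exp : C₁*((m:ℝ)+1)^D₁*B^m = CB*((m:ℝ)+1)^D₁*B^m + 2*CF*((m:ℝ)+1)^D₁*B^m := by
        rw [hC₁]; ring
      rw [hC₁exp]
      linarith
    have h6 : A^n ≤ (2*C₁/cA)*((m:ℝ)+1)^D₁*B^m := by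
      have h7 : cA * A^n ≤ 2*(C₁*((m:ℝ)+1)^D₁*B^m) := by linarith
      calc A^n = (1/cA) * (cA * A^n) := by field_simp
        _ ≤ (1/cA) * (2*(C₁*((m:ℝ)+1)^D₁*B^m)) := mul_le_mul_of_nonneg_left h7 (by positivity)
        _ = (2*C₁/cA)*((m:ℝ)+1)^D₁*B^m := by
            field_simp
    calc A^n ≤ (2*C₁/cA)*((m:ℝ)+1)^D₁*B^m := h6
      _ ≤ C₂*((m:ℝ)+1)^D₁*B^m := by
          apply mul_le_mul_of_nonneg_right _ (by positivity)
          exact mul_le_mul_of_nonneg_right hC₂b (by positivity)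
  -- Step II : B^m ≤ C₄ (n+1)^{D₂} A^n
  have hStepII : B^m ≤ C₄ * ((n:ℝ)+1)^D₂ * A^n := by
    have h1 : cB * B^m ≤ ‖TA‖ + (EUb + EVb) := by
      have h2 := tri TB TA
      have h2' : ‖TB - TA‖ = ‖TA - TB‖ := by
        rw [show (TB - TA) = -(TA - TB) by ring, norm_neg]
      rw [h2'] at h2
      linarith [hdiffabs, hTBlo]
    have h3 : EUb ≤ 2*CE*((n:ℝ)+1)^D₂*A^n := by
      rw [hEUb]
      have hα₁n : α₁^n ≤ A^n := pow_le_pow_left₀ hα₁0.le hα₁A.le n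
      have hnD : ((n:ℝ)+1)^DE ≤ ((n:ℝ)+1)^D₂ := pow_le_pow_right₀ hn1pow hDED₂
      calc 2*CE*((n:ℝ)+1)^DE*α₁^n ≤ 2*CE*((n:ℝ)+1)^D₂*α₁^n := by
            apply mul_le_mul_of_nonneg_right _ (by positivity)
            exact mul_le_mul_of_nonneg_left hnD (by positivity)
        _ ≤ 2*CE*((n:ℝ)+1)^D₂*A^n := by
            apply mul_le_mul_of_nonneg_left hα₁n (by positivity)
    have h4 : ‖TA‖ ≤ CA*((n:ℝ)+1)^D₂*A^n := by
      calc ‖TA‖ ≤ CA*((n:ℝ)+1)^Ru.domPoly.natDegree*A^n := hTAhi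
        _ ≤ CA*((n:ℝ)+1)^D₂*A^n := by
            apply mul_le_mul_of_nonneg_right _ (by positivity)
            apply mul_le_mul_of_nonneg_left _ hCA.le
            exact pow_le_pow_right₀ hn1pow hσD₂
    have h5 : (cB/2) * B^m ≤ (CA + 2*CE)*((n:ℝ)+1)^D₂*A^n := by
      have h6 := hEVb_half
      have hexp : (CA + 2*CE)*((n:ℝ)+1)^D₂*A^n
          = CA*((n:ℝ)+1)^D₂*A^n + 2*CE*((n:ℝ)+1)^D₂*A^n := by ring
      rw [hexp]
      linarith
    have h6 : B^m ≤ (2*(CA + 2*CE)/cB)*((n:ℝ)+1)^D₂*A^n := by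
      have h7 : cB * B^m ≤ 2*((CA + 2*CE)*((n:ℝ)+1)^D₂*A^n) := by linarith
      calc B^m = (1/cB) * (cB * B^m) := by field_simp
        _ ≤ (1/cB) * (2*((CA + 2*CE)*((n:ℝ)+1)^D₂*A^n)) :=
            mul_le_mul_of_nonneg_left h7 (by positivity)
        _ = (2*(CA + 2*CE)/cB)*((n:ℝ)+1)^D₂*A^n := by
            field_simp
    calc B^m ≤ (2*(CA + 2*CE)/cB)*((n:ℝ)+1)^D₂*A^n := h6
      _ ≤ C₄*((n:ℝ)+1)^D₂*A^n := by
          apply mul_le_mul_of_nonneg_right _ (by positivity)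
          exact mul_le_mul_of_nonneg_right hC₄b (by positivity)
  -- Step III : m + 1 ≤ C₇ (n+1)
  have hStepIII : (m:ℝ) + 1 ≤ C₇ * ((n:ℝ)+1) := by
    have h1 : (m:ℝ) * Real.log B ≤ Real.log C₄ + D₂ * Real.log ((n:ℝ)+1) + n * Real.log A := by
      have e1 : Real.log (C₄ * ((n:ℝ)+1)^D₂ * A^n)
          = Real.log (C₄ * ((n:ℝ)+1)^D₂) + Real.log (A^n) :=
        Real.log_mul (ne_of_gt (by positivity)) (ne_of_gt (by positivity))
      have e2 : Real.log (C₄ * ((n:ℝ)+1)^D₂) = Real.log C₄ + Real.log (((n:ℝ)+1)^D₂) :=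
        Real.log_mul (ne_of_gt hC₄0) (ne_of_gt (by positivity))
      have h2 := Real.log_le_log (show (0:ℝ) < B^m by positivity) hStepII
      rw [e1, e2, Real.log_pow, Real.log_pow, Real.log_pow] at h2
      exact h2
    have h2 : Real.log ((n:ℝ)+1) ≤ (n:ℝ)+1 := by
      have := Real.log_le_sub_one_of_pos (show (0:ℝ) < (n:ℝ)+1 by positivity)
      linarith
    have h3 : (m:ℝ) * Real.log B ≤ C₅ * ((n:ℝ)+1) := by
      rw [hC₅]
      have hD₂' : (D₂:ℝ) * Real.log ((n:ℝ)+1) ≤ (D₂:ℝ) * ((n:ℝ)+1) :=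
        mul_le_mul_of_nonneg_left h2 (by positivity)
      have hnA : (n:ℝ) * Real.log A ≤ ((n:ℝ)+1) * Real.log A :=
        mul_le_mul_of_nonneg_right (by linarith) hlogA.le
      have hlogC₄' : Real.log C₄ ≤ Real.log C₄ * ((n:ℝ)+1) := by
        calc Real.log C₄ = Real.log C₄ * 1 := (mul_one _).symm
          _ ≤ Real.log C₄ * ((n:ℝ)+1) := mul_le_mul_of_nonneg_left hn1pow hlogC₄
      have hexpand : (Real.log C₄ + (D₂:ℝ) + Real.log A) * ((n:ℝ)+1)
          = Real.log C₄ * ((n:ℝ)+1) + (D₂:ℝ) * ((n:ℝ)+1) + ((n:ℝ)+1) * Real.log A := by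
        ring
      rw [hexpand]
      linarith only [h1, hD₂', hnA, hlogC₄']
    have h4 : (m:ℝ) ≤ (C₅ / Real.log B) * ((n:ℝ)+1) := by
      rw [div_mul_eq_mul_div, le_div_iff₀ hlogB]
      exact h3
    rw [hC₇]
    have hexpand : (C₅ / Real.log B + 1) * ((n:ℝ)+1)
        = (C₅ / Real.log B) * ((n:ℝ)+1) + ((n:ℝ)+1) := by ring
    rw [hexpand]
    linarith only [h4, hn1R]
  -- Step IV : α'^n ≤ C₂ (m+1)^{D₁} γ^m
  have hStepIV : α'^n ≤ C₂ * ((m:ℝ)+1)^D₁ * γ^m := by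
    have h1 : (A^n) ^ κ ≤ (C₂ * ((m:ℝ)+1)^D₁ * B^m) ^ κ :=
      Real.rpow_le_rpow (by positivity) hStepI hκ0.le
    have hl : (A^n) ^ κ = α'^n := by
      rw [pow_rpow A hA0 n κ, hAκ]
    have hr : (C₂ * ((m:ℝ)+1)^D₁ * B^m) ^ κ
        = C₂^κ * (((m:ℝ)+1)^D₁)^κ * (B^m)^κ := by
      rw [Real.mul_rpow (by positivity) (by positivity),
        Real.mul_rpow (by positivity) (by positivity)]
    rw [hl, hr] at h1
    have h2 : C₂^κ ≤ C₂ := by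
      calc C₂^κ ≤ C₂^(1:ℝ) := Real.rpow_le_rpow_of_exponent_le hC₂1 hκ1.le
        _ = C₂ := Real.rpow_one C₂
    have h3 : (((m:ℝ)+1)^D₁)^κ ≤ ((m:ℝ)+1)^D₁ := by
      calc (((m:ℝ)+1)^D₁)^κ ≤ (((m:ℝ)+1)^D₁)^(1:ℝ) :=
            Real.rpow_le_rpow_of_exponent_le (one_le_pow₀ hm1pow) hκ1.le
        _ = ((m:ℝ)+1)^D₁ := Real.rpow_one _
    have h4 : (B^m)^κ = (B^κ)^m := pow_rpow B hB0 m κ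
    rw [h4, ← hγ] at h1
    calc α'^n ≤ C₂^κ * (((m:ℝ)+1)^D₁)^κ * γ^m := h1
      _ ≤ C₂ * ((m:ℝ)+1)^D₁ * γ^m := by
          apply mul_le_mul_of_nonneg_right _ (by positivity)
          apply mul_le_mul h2 h3 (by positivity) (by positivity)
  -- Step V : EUb ≤ γ^m
  have hStepV : EUb ≤ γ^m := by
    have hα'n : α₁^n = (α₁/α')^n * α'^n := by
      rw [div_pow]; field_simp
    have h0 : EUb = 2*CE*(((n:ℝ)+1)^DE*(α₁/α')^n) * α'^n := by
      rw [hEUb, hα'n]; ring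
    have h1 : EUb ≤ 2*CE*(((n:ℝ)+1)^DE*(α₁/α')^n) * (C₂ * ((m:ℝ)+1)^D₁ * γ^m) := by
      rw [h0]
      apply mul_le_mul_of_nonneg_left hStepIV (by positivity)
    have h2 : ((m:ℝ)+1)^D₁ ≤ C₇^D₁ * ((n:ℝ)+1)^D₁ := by
      calc ((m:ℝ)+1)^D₁ ≤ (C₇*((n:ℝ)+1))^D₁ := pow_le_pow_left₀ (by positivity) hStepIII D₁
        _ = C₇^D₁ * ((n:ℝ)+1)^D₁ := mul_pow _ _ _
    have h3 : EUb ≤ 2*CE*C₂*C₇^D₁ * (((n:ℝ)+1)^(DE+D₁)*(α₁/α')^n) * γ^m := by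
      have he : 2*CE*C₂*C₇^D₁ * (((n:ℝ)+1)^(DE+D₁)*(α₁/α')^n) * γ^m
          = 2*CE*(((n:ℝ)+1)^DE*(α₁/α')^n) * (C₂ * (C₇^D₁*((n:ℝ)+1)^D₁) * γ^m) := by
        rw [pow_add]; ring
      rw [he]
      calc EUb ≤ 2*CE*(((n:ℝ)+1)^DE*(α₁/α')^n) * (C₂ * ((m:ℝ)+1)^D₁ * γ^m) := h1
        _ ≤ 2*CE*(((n:ℝ)+1)^DE*(α₁/α')^n) * (C₂ * (C₇^D₁*((n:ℝ)+1)^D₁) * γ^m) := by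
            apply mul_le_mul_of_nonneg_left _ (by positivity)
            apply mul_le_mul_of_nonneg_right _ (by positivity)
            exact mul_le_mul_of_nonneg_left h2 hC₂0.le
    have h5 := hN₃ n hnN₃
    calc EUb ≤ 2*CE*C₂*C₇^D₁ * (((n:ℝ)+1)^(DE+D₁)*(α₁/α')^n) * γ^m := h3
      _ ≤ 2*CE*C₂*C₇^D₁ * (1/(2*CE*C₂*C₇^D₁)) * γ^m := by
          apply mul_le_mul_of_nonneg_right _ (by positivity)
          exact mul_le_mul_of_nonneg_left h5 (by positivity)
      _ = γ^m := by
          have hne : (2*CE*C₂*C₇^D₁ : ℝ) ≠ 0 := by positivity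
          rw [mul_one_div, div_self hne, one_mul]
  -- Step VI : EVb ≤ 2 CF β'^m
  have hStepVI : EVb ≤ 2*CF*β'^m := by
    have hβ'm : β₁^m = (β₁/β')^m * β'^m := by
      rw [div_pow]; field_simp
    have h5 := hM₃ m hmM₃
    calc EVb = 2*CF*(((m:ℝ)+1)^DF*(β₁/β')^m) * β'^m := by rw [hEVb, hβ'm]; ring
      _ ≤ 2*CF*1 * β'^m := by
          apply mul_le_mul_of_nonneg_right _ (by positivity)
          exact mul_le_mul_of_nonneg_left h5 (by positivity)
      _ = 2*CF*β'^m := by ring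
  -- final assembly
  have hfrac : ‖TA / TB - 1‖ = ‖TA - TB‖ / ‖TB‖ := by
    rw [show TA / TB - 1 = (TA - TB) / TB by field_simp, norm_div]
  have hΓinv : Γ ^ (-(m:ℝ)) = (Γ⁻¹)^m := by
    rw [Real.rpow_neg hΓ0.le, Real.rpow_natCast, inv_pow]
  have hγΓ : γ/B ≤ Γ⁻¹ := by
    have h1 : Γ ≤ B/γ := by rw [hΓm]; exact min_le_right _ _
    have h2 : (B/γ)⁻¹ ≤ Γ⁻¹ := inv_anti₀ hΓ0 h1
    calc γ/B = (B/γ)⁻¹ := by rw [inv_div]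
      _ ≤ Γ⁻¹ := h2
  have hβ'Γ : β'/B ≤ Γ⁻¹ := by
    have h1 : Γ ≤ B/β' := by rw [hΓm]; exact min_le_left _ _
    have h2 : (B/β')⁻¹ ≤ Γ⁻¹ := inv_anti₀ hΓ0 h1
    calc β'/B = (B/β')⁻¹ := by rw [inv_div]
      _ ≤ Γ⁻¹ := h2
  have hγm : γ^m / B^m ≤ (Γ⁻¹)^m := by
    rw [← div_pow]
    exact pow_le_pow_left₀ (by positivity) hγΓ m
  have hβ'm2 : β'^m / B^m ≤ (Γ⁻¹)^m := by
    rw [← div_pow]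
    exact pow_le_pow_left₀ (by positivity) hβ'Γ m
  rw [hfrac]
  calc ‖TA - TB‖ / ‖TB‖ ≤ (EUb + EVb) / (cB * B^m) := by
        apply div_le_div₀ (by positivity) hdiffabs (by positivity) hTBlo
    _ ≤ (γ^m + 2*CF*β'^m) / (cB * B^m) := by
        apply div_le_div_of_nonneg_right _ (by positivity)
        linarith [hStepV, hStepVI]
    _ = (1/cB) * (γ^m/B^m) + (2*CF/cB) * (β'^m/B^m) := by
        field_simp
    _ ≤ (1/cB) * (Γ⁻¹)^m + (2*CF/cB) * (Γ⁻¹)^m := by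
        apply add_le_add
        · exact mul_le_mul_of_nonneg_left hγm (by positivity)
        · exact mul_le_mul_of_nonneg_left hβ'm2 (by positivity)
    _ = (1 + 2*CF)/cB * (Γ⁻¹)^m := by ring
    _ = (1 + 2*CF)/cB * Γ ^ (-(m:ℝ)) := by rw [hΓinv]
end

section
/- Let K be a number field, let α, β ∈ K be nonzero and multiplicatively independent, and let p, q ∈ K[X] be nonzero polynomials. Then there are only finitely many pairs (n, m) ∈ ℕ × ℕ such that q(m)·α^n = p(n)·β^m. -/
open Polynomial

namespace DegenerateAux

open scoped NumberField nonZeroDivisors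
open IsDedekindDomain NumberField

variable {K : Type*} [Field K] [NumberField K]

lemma emb_nonempty : Nonempty (K →+* ℂ) := by
  have h := NumberField.Embeddings.card K ℂ
  exact Fintype.card_pos_iff.mp (h ▸ Module.finrank_pos)

/-- Max of `‖φ x‖` over all complex embeddings. -/
noncomputable def MX (x : K) : ℝ :=
  haveI : Nonempty (K →+* ℂ) := emb_nonempty
  Finset.univ.sup' Finset.univ_nonempty fun φ : K →+* ℂ => ‖φ x‖

lemma le_MX (x : K) (φ : K →+* ℂ) : ‖φ x‖ ≤ MX x := by
  haveI : Nonempty (K →+* ℂ) := emb_nonempty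
  unfold MX
  exact Finset.le_sup' (fun φ : K →+* ℂ => ‖φ x‖) (Finset.mem_univ φ)

lemma MX_nonneg (x : K) : 0 ≤ MX x := by
  haveI : Nonempty (K →+* ℂ) := emb_nonempty
  exact le_trans (norm_nonneg _) (le_MX x (Classical.arbitrary _))

lemma normProd (x : K) :
    |((Algebra.norm ℚ x : ℚ) : ℝ)| = ∏ φ : K →+* ℂ, ‖φ x‖ := by
  have h := Algebra.norm_eq_prod_embeddings ℚ ℂ (x : K)
  have h2 : ‖algebraMap ℚ ℂ (Algebra.norm ℚ x)‖ = ∏ σ : K →ₐ[ℚ] ℂ, ‖σ x‖ := by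
    rw [h, norm_prod]
  have h3 : ‖algebraMap ℚ ℂ (Algebra.norm ℚ x)‖ = |((Algebra.norm ℚ x : ℚ) : ℝ)| := by
    rw [eq_ratCast]
    rw [show ((Algebra.norm ℚ x : ℚ) : ℂ) = (((Algebra.norm ℚ x : ℚ) : ℝ) : ℂ) by push_cast; ring]
    rw [Complex.norm_real, Real.norm_eq_abs]
  rw [← h3, h2]
  exact (Fintype.prod_equiv (RingHom.equivRatAlgHom K ℂ) (fun φ : K →+* ℂ => ‖φ x‖)
    (fun σ : K →ₐ[ℚ] ℂ => ‖σ x‖) fun φ => rfl).symm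

lemma one_le_abs_norm_coe {y : 𝓞 K} (hy : y ≠ 0) :
    1 ≤ |((Algebra.norm ℚ (algebraMap (𝓞 K) K y) : ℚ) : ℝ)| := by
  have h1 : Algebra.norm ℤ y ≠ 0 := by
    rw [Algebra.norm_ne_zero_iff]
    exact hy
  have h2 : (Algebra.norm ℤ y : ℚ) = Algebra.norm ℚ (algebraMap (𝓞 K) K y) :=
    Algebra.coe_norm_int y
  rw [← h2]
  rw [show |(((Algebra.norm ℤ y : ℤ) : ℚ) : ℝ)| = |((Algebra.norm ℤ y : ℤ) : ℝ)| by push_cast; ring]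
  rw [← Int.cast_abs]
  exact_mod_cast Int.one_le_abs h1




open IsDedekindDomain NumberField

variable {K : Type*} [Field K] [NumberField K]

/-- Additive valuation of `x ∈ K` at the finite place `v`. -/
noncomputable def nuK (v : HeightOneSpectrum (𝓞 K)) (x : K) : ℤ :=
  FractionalIdeal.count K v (FractionalIdeal.spanSingleton (𝓞 K)⁰ x)

lemma span_ne_zero {x : K} (hx : x ≠ 0) :
    FractionalIdeal.spanSingleton (𝓞 K)⁰ x ≠ 0 :=
  FractionalIdeal.spanSingleton_ne_zero_iff.mpr hx

lemma nuK_mul (v : HeightOneSpectrum (𝓞 K)) {x y : K} (hx : x ≠ 0) (hy : y ≠ 0) :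
    nuK v (x * y) = nuK v x + nuK v y := by
  rw [nuK, nuK, nuK, ← FractionalIdeal.spanSingleton_mul_spanSingleton,
    FractionalIdeal.count_mul K v (span_ne_zero hx) (span_ne_zero hy)]

lemma nuK_pow (v : HeightOneSpectrum (𝓞 K)) (n : ℕ) (x : K) :
    nuK v (x ^ n) = n * nuK v x := by
  rw [nuK, nuK, ← FractionalIdeal.spanSingleton_pow, FractionalIdeal.count_pow]

lemma nuK_one (v : HeightOneSpectrum (𝓞 K)) : nuK v (1 : K) = 0 := by
  rw [nuK, FractionalIdeal.spanSingleton_one, FractionalIdeal.count_one]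

lemma nuK_zpow (v : HeightOneSpectrum (𝓞 K)) {x : K} (hx : x ≠ 0) (k : ℤ) :
    nuK v (x ^ k) = k * nuK v x := by
  cases k with
  | ofNat n => rw [Int.ofNat_eq_coe, zpow_natCast]; exact_mod_cast nuK_pow v n x
  | negSucc n =>
      have h1 : x ^ (Int.negSucc n) * x ^ (n + 1 : ℕ) = 1 := by
        rw [zpow_negSucc]
        field_simp
      have h2 := nuK_mul v (zpow_ne_zero (Int.negSucc n) hx) (pow_ne_zero (n+1) hx)
      rw [h1, nuK_one, nuK_pow] at h2
      rw [Int.negSucc_eq] at h2 ⊢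
      push_cast at h2 ⊢
      linarith

lemma nuK_coe_nonneg (v : HeightOneSpectrum (𝓞 K)) (y : 𝓞 K) :
    0 ≤ nuK v (algebraMap (𝓞 K) K y) := by
  rw [nuK, ← FractionalIdeal.coeIdeal_span_singleton]
  exact FractionalIdeal.count_coe_nonneg K v _

lemma exists_int_of_nuK (x : K) (hx : x ≠ 0) (h : ∀ v, nuK v x = 0) :
    ∃ y : 𝓞 K, algebraMap (𝓞 K) K y = x := by
  have hI := span_ne_zero hx
  have hfact := FractionalIdeal.finprod_heightOneSpectrum_factorization' (K := K) hI
  have h1 : FractionalIdeal.spanSingleton (𝓞 K)⁰ x = 1 := by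
    rw [← hfact]
    have : ∀ v : HeightOneSpectrum (𝓞 K),
        (v.asIdeal : FractionalIdeal (𝓞 K)⁰ K) ^
          (FractionalIdeal.count K v (FractionalIdeal.spanSingleton (𝓞 K)⁰ x)) = 1 := by
      intro v
      rw [show FractionalIdeal.count K v (FractionalIdeal.spanSingleton (𝓞 K)⁰ x) = 0 from h v,
        zpow_zero]
    rw [finprod_congr this, finprod_one]
  have hmem : x ∈ (1 : FractionalIdeal (𝓞 K)⁰ K) := by
    rw [← h1]
    exact FractionalIdeal.mem_spanSingleton_self _ x
  exact (FractionalIdeal.mem_one_iff _).mp hmem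

lemma nuK_coe_le (v : HeightOneSpectrum (𝓞 K)) {y : 𝓞 K} (hy : y ≠ 0) :
    ((nuK v (algebraMap (𝓞 K) K y) : ℤ) : ℝ)
      ≤ 2 * Real.log |((Algebra.norm ℚ (algebraMap (𝓞 K) K y) : ℚ) : ℝ)| := by
  have habs := one_le_abs_norm_coe (K := K) hy
  have hlog0 : 0 ≤ Real.log |((Algebra.norm ℚ (algebraMap (𝓞 K) K y) : ℚ) : ℝ)| :=
    Real.log_nonneg habs
  classical
  have hspan : (Ideal.span {y} : Ideal (𝓞 K)) ≠ 0 := by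
    simpa [Ideal.span_singleton_eq_bot] using hy
  set c : ℕ := (Associates.mk v.asIdeal).count (Associates.mk (Ideal.span {y} : Ideal (𝓞 K))).factors with hc
  have he : nuK v (algebraMap (𝓞 K) K y) = (c : ℤ) := by
    rw [nuK, ← FractionalIdeal.coeIdeal_span_singleton, FractionalIdeal.count_coe K v hspan]
  rcases Nat.eq_zero_or_pos c with hc0 | hcpos
  · rw [he, hc0]
    simpa using hlog0
  · -- v^c ∣ span {y}
    have hdvd : v.asIdeal ^ c ∣ Ideal.span {y} := by
      rw [← v.intValuation_le_pow_iff_dvd y c]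
      rw [v.intValuation_if_neg hy, ← hc]
    have hNnz : Algebra.norm ℤ y ≠ 0 := by rw [Algebra.norm_ne_zero_iff]; exact hy
    have hnormdvd : Ideal.absNorm v.asIdeal ^ c ∣ (Algebra.norm ℤ y).natAbs := by
      have h2 := map_dvd Ideal.absNorm hdvd
      rwa [map_pow, Ideal.absNorm_span_singleton] at h2
    have h2le : 2 ≤ Ideal.absNorm v.asIdeal := by
      by_contra hlt
      push_neg at hlt
      rcases (by omega : Ideal.absNorm v.asIdeal = 0 ∨ Ideal.absNorm v.asIdeal = 1) with h | h
      · rw [h, zero_pow (by omega : c ≠ 0)] at hnormdvd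
        exact absurd (Nat.eq_zero_of_zero_dvd hnormdvd)
          (by simpa [Int.natAbs_eq_zero] using hNnz)
      · exact v.isPrime.ne_top (Ideal.absNorm_eq_one_iff.mp h)
    have hpow : 2 ^ c ≤ (Algebra.norm ℤ y).natAbs :=
      le_trans (Nat.pow_le_pow_left h2le c)
        (Nat.le_of_dvd (Int.natAbs_pos.mpr hNnz) hnormdvd)
    -- pass to real logs
    have hlog : (c : ℝ) * Real.log 2 ≤ Real.log ((Algebra.norm ℤ y).natAbs : ℝ) := by
      rw [← Real.log_pow]
      apply Real.log_le_log (by positivity)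
      exact_mod_cast hpow
    have hNeq : ((Algebra.norm ℤ y).natAbs : ℝ)
        = |((Algebra.norm ℚ (algebraMap (𝓞 K) K y) : ℚ) : ℝ)| := by
      rw [← Algebra.coe_norm_int y]
      push_cast [Nat.cast_natAbs]
      ring
    have hlog2 : (1:ℝ)/2 ≤ Real.log 2 := by
      have := Real.log_two_gt_d9
      linarith
    rw [hNeq] at hlog
    rw [he]
    push_cast
    nlinarith [Nat.cast_nonneg (α := ℝ) c]



variable {K : Type*} [Field K] [NumberField K]

lemma norm_emb_ne_zero (φ : K →+* ℂ) {x : K} (hx : x ≠ 0) : ‖φ x‖ ≠ 0 := by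
  simp only [ne_eq, norm_eq_zero]
  exact fun h => hx (φ.injective (by rw [h, map_zero]))

lemma norm_emb_pos (φ : K →+* ℂ) {x : K} (hx : x ≠ 0) : 0 < ‖φ x‖ :=
  lt_of_le_of_ne (norm_nonneg _) (Ne.symm (norm_emb_ne_zero φ hx))

/-- The combined archimedean/finite log-vector of `x`. -/
noncomputable def uu (x : K) : (K →+* ℂ) ⊕ HeightOneSpectrum (𝓞 K) → ℝ :=
  Sum.elim (fun φ => Real.log ‖φ x‖) (fun v => ((nuK v x : ℤ) : ℝ))

lemma uu_comb {x y : K} (hx : x ≠ 0) (hy : y ≠ 0) (k l : ℤ)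
    (i : (K →+* ℂ) ⊕ HeightOneSpectrum (𝓞 K)) :
    uu (x ^ k * y ^ l) i = k * uu x i + l * uu y i := by
  cases i with
  | inl φ =>
      simp only [uu, Sum.elim_inl, map_mul, map_zpow₀, norm_mul, norm_zpow]
      rw [Real.log_mul (zpow_ne_zero _ (norm_emb_ne_zero φ hx))
        (zpow_ne_zero _ (norm_emb_ne_zero φ hy)), Real.log_zpow, Real.log_zpow]
  | inr v =>
      simp only [uu, Sum.elim_inr]
      rw [nuK_mul v (zpow_ne_zero _ hx) (zpow_ne_zero _ hy), nuK_zpow v hx, nuK_zpow v hy]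
      push_cast
      ring

/-- An element whose combined log-vector vanishes is a root of unity. -/
lemma rou_of_uu_zero {x : K} (hx : x ≠ 0) (h : ∀ i, uu x i = 0) :
    ∃ t : ℕ, 0 < t ∧ x ^ t = 1 := by
  have hnu : ∀ v, nuK v x = 0 := by
    intro v
    have := h (Sum.inr v)
    simpa [uu] using this
  obtain ⟨y, rfl⟩ := exists_int_of_nuK x hx hnu
  have hnorm : ∀ φ : K →+* ℂ, ‖φ (algebraMap (𝓞 K) K y)‖ = 1 := by
    intro φ
    have h0 := h (Sum.inl φ)
    simp only [uu, Sum.elim_inl] at h0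
    rcases Real.log_eq_zero.mp h0 with h1 | h1 | h1
    · exact absurd h1 (norm_emb_ne_zero φ hx)
    · exact h1
    · exfalso
      have := norm_nonneg (φ (algebraMap (𝓞 K) K y))
      linarith
  obtain ⟨t, ht, hpow⟩ := NumberField.Embeddings.pow_eq_one_of_norm_eq_one K ℂ
    (NumberField.RingOfIntegers.isIntegral_coe y) hnorm
  exact ⟨t, ht, hpow⟩

lemma indep_minor (α β : K) (hα : α ≠ 0) (hβ : β ≠ 0)
    (hindep : ∀ a b : ℤ, α ^ a * β ^ b = 1 → a = 0 ∧ b = 0) :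
    ∃ i j, uu α i * uu β j ≠ uu α j * uu β i := by
  by_contra hcon
  push_neg at hcon
  -- coefficients of a vanishing integer combination must vanish
  have key : ∀ k l : ℤ, (∀ i, (k : ℝ) * uu α i + (l : ℝ) * uu β i = 0) → k = 0 ∧ l = 0 := by
    intro k l h
    have hx : α ^ k * β ^ l ≠ 0 := mul_ne_zero (zpow_ne_zero _ hα) (zpow_ne_zero _ hβ)
    have hz : ∀ i, uu (α ^ k * β ^ l) i = 0 := fun i => by
      rw [uu_comb hα hβ k l i, h i]
    obtain ⟨t, ht, hpow⟩ := rou_of_uu_zero hx hz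
    have heq1 : α ^ (k * (t : ℤ)) * β ^ (l * (t : ℤ)) = 1 := by
      have h5 : α ^ (k * (t : ℤ)) * β ^ (l * (t : ℤ)) = (α ^ k * β ^ l) ^ (t : ℕ) := by
        rw [zpow_mul, zpow_mul, ← mul_zpow, zpow_natCast]
      rw [h5, hpow]
    obtain ⟨hk, hl⟩ := hindep _ _ heq1
    have ht0 : (t : ℤ) ≠ 0 := by exact_mod_cast (by omega : t ≠ 0)
    constructor
    · rcases mul_eq_zero.mp hk with h' | h'
      · exact h'
      · exact absurd h' ht0
    · rcases mul_eq_zero.mp hl with h' | h'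
      · exact h'
      · exact absurd h' ht0
  have hαex : ∃ i, uu α i ≠ 0 := by
    by_contra h
    push_neg at h
    have := key 1 0 (fun i => by rw [h i]; push_cast; ring)
    exact one_ne_zero this.1
  have hβex : ∃ i, uu β i ≠ 0 := by
    by_contra h
    push_neg at h
    have := key 0 1 (fun i => by rw [h i]; push_cast; ring)
    exact one_ne_zero this.2
  obtain ⟨i₀, hi₀⟩ := hαex
  set s : ℝ := uu β i₀ / uu α i₀ with hs
  have hprop : ∀ i, uu β i = s * uu α i := by
    intro i
    have hc := hcon i₀ i
    rw [hs]
    field_simp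
    nlinarith [hc]
  by_cases hfin : ∀ v : IsDedekindDomain.HeightOneSpectrum (𝓞 K), nuK v α = 0
  · -- "unit" case : produce infinitely many algebraic integers of bounded house
    haveI : Nonempty (K →+* ℂ) := emb_nonempty
    set U : ℝ := Finset.univ.sup' Finset.univ_nonempty
      (fun φ : K →+* ℂ => |Real.log ‖φ α‖|) with hU
    have hU0 : 0 ≤ U := by
      obtain ⟨φ⟩ := (inferInstance : Nonempty (K →+* ℂ))
      have h1 := Finset.le_sup' (fun φ : K →+* ℂ => |Real.log ‖φ α‖|) (Finset.mem_univ φ)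
      rw [hU]
      exact le_trans (abs_nonneg _) h1
    have hβfin : ∀ v, nuK v β = 0 := by
      intro v
      have h1 := hprop (Sum.inr v)
      have h2 : uu α (Sum.inr v) = 0 := by simpa [uu] using hfin v
      rw [h2, mul_zero] at h1
      exact_mod_cast (by simpa [uu] using h1 : ((nuK v β : ℤ) : ℝ) = 0)
    set g : ℕ → K := fun l => α ^ (round ((l : ℝ) * s)) * β ^ (-(l : ℤ)) with hg
    have hg0 : ∀ l, g l ≠ 0 := fun l => mul_ne_zero (zpow_ne_zero _ hα) (zpow_ne_zero _ hβ)
    have hgnu : ∀ l v, nuK v (g l) = 0 := by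
      intro l v
      have h2 := uu_comb hα hβ (round ((l : ℝ) * s)) (-(l : ℤ)) (Sum.inr v)
      have h3 : uu α (Sum.inr v) = 0 := by simp [uu, hfin v]
      have h4 : uu β (Sum.inr v) = 0 := by simp [uu, hβfin v]
      rw [h3, h4, mul_zero, mul_zero, add_zero] at h2
      have h1 : uu (g l) (Sum.inr v) = 0 := h2
      simp only [uu, Sum.elim_inr] at h1
      exact_mod_cast h1
    have hgmem : ∀ l : ℕ, g l ∈ {x : K | IsIntegral ℤ x ∧ ∀ φ : K →+* ℂ, ‖φ x‖ ≤ Real.exp U} := by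
      intro l
      constructor
      · obtain ⟨y, hy⟩ := exists_int_of_nuK (g l) (hg0 l) (hgnu l)
        rw [← hy]
        exact NumberField.RingOfIntegers.isIntegral_coe y
      · intro φ
        have hlog : Real.log ‖φ (g l)‖
            = ((round ((l : ℝ) * s) : ℝ) - (l : ℝ) * s) * Real.log ‖φ α‖ := by
          have h1 := uu_comb hα hβ (round ((l : ℝ) * s)) (-(l : ℤ)) (Sum.inl φ)
          have h2 : uu β (Sum.inl φ) = s * uu α (Sum.inl φ) := hprop (Sum.inl φ)
          rw [h2] at h1
          have h3 : uu (g l) (Sum.inl φ)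
              = ((round ((l : ℝ) * s) : ℤ) : ℝ) * uu α (Sum.inl φ)
                + ((-(l : ℤ) : ℤ) : ℝ) * (s * uu α (Sum.inl φ)) := h1
          simp only [uu, Sum.elim_inl] at h3
          rw [h3]
          push_cast
          ring
        have habs : |Real.log ‖φ (g l)‖| ≤ U := by
          rw [hlog, abs_mul]
          have h3 : |(round ((l : ℝ) * s) : ℝ) - (l : ℝ) * s| ≤ 1/2 := by
            rw [abs_sub_comm]
            exact abs_sub_round _
          have h4 : |Real.log ‖φ α‖| ≤ U := by
            rw [hU]
            exact Finset.le_sup' (fun φ : K →+* ℂ => |Real.log ‖φ α‖|) (Finset.mem_univ φ)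
          nlinarith [abs_nonneg (Real.log ‖φ α‖)]
        have hpos : 0 < ‖φ (g l)‖ := norm_emb_pos φ (hg0 l)
        calc ‖φ (g l)‖ = Real.exp (Real.log ‖φ (g l)‖) := (Real.exp_log hpos).symm
          _ ≤ Real.exp U := Real.exp_le_exp.mpr (le_trans (le_abs_self _) habs)
    have hginj : Function.Injective g := by
      intro l1 l2 h12
      have hone : α ^ (round ((l1 : ℝ) * s) - round ((l2 : ℝ) * s)) * β ^ ((l2 : ℤ) - l1) = 1 := by
        rw [show ((l2 : ℤ) - l1) = (-(l1 : ℤ)) - (-(l2 : ℤ)) by ring,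
          zpow_sub₀ hα, zpow_sub₀ hβ, div_mul_div_comm]
        have h12' : α ^ (round ((l1 : ℝ) * s)) * β ^ (-(l1 : ℤ))
            = α ^ (round ((l2 : ℝ) * s)) * β ^ (-(l2 : ℤ)) := h12
        rw [h12']
        exact div_self (mul_ne_zero (zpow_ne_zero _ hα) (zpow_ne_zero _ hβ))
      have := (hindep _ _ hone).2
      omega
    exact (NumberField.Embeddings.finite_of_norm_le K ℂ (Real.exp U)).not_infinite
      (Set.infinite_of_injective_forall_mem hginj hgmem)
  · push_neg at hfin
    obtain ⟨v, hv⟩ := hfin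
    set a : ℤ := nuK v α with ha
    set b : ℤ := nuK v β with hb
    have hsa : (b : ℝ) = s * a := by
      have := hprop (Sum.inr v)
      simpa [uu, ← ha, ← hb] using this
    have hcomb : ∀ i, ((b : ℤ) : ℝ) * uu α i + ((-a : ℤ) : ℝ) * uu β i = 0 := by
      intro i
      have h1 := hprop i
      push_cast
      rw [h1, hsa]
      ring
    have := (key b (-a) hcomb).2
    exact hv (by omega)

variable {K : Type*} [Field K] [NumberField K]

lemma one_le_pow_real {a : ℝ} (ha : 1 ≤ a) (n : ℕ) : 1 ≤ a ^ n := by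
  induction n with
  | zero => simp
  | succ k ih => rw [pow_succ]; nlinarith

lemma poly_upper (r : K[X]) : ∃ M : ℝ, 1 ≤ M ∧ ∀ (φ : K →+* ℂ) (n : ℕ),
    ‖φ (r.eval ((n : ℕ) : K))‖ ≤ M * ((n : ℝ) + 2) ^ r.natDegree := by
  refine ⟨1 + ∑ i ∈ Finset.range (r.natDegree + 1), MX (r.coeff i), ?_, ?_⟩
  · have : 0 ≤ ∑ i ∈ Finset.range (r.natDegree + 1), MX (r.coeff i) :=
      Finset.sum_nonneg fun i _ => MX_nonneg _
    linarith
  intro φ n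
  have h1 : φ (r.eval ((n : ℕ) : K)) = Polynomial.eval₂ φ ((n : ℕ) : ℂ) r :=
    (Polynomial.eval₂_at_natCast φ n).symm
  rw [h1, Polynomial.eval₂_eq_sum_range]
  refine le_trans (norm_sum_le _ _) ?_
  have hterm : ∀ i ∈ Finset.range (r.natDegree + 1),
      ‖φ (r.coeff i) * ((n : ℕ) : ℂ) ^ i‖ ≤ MX (r.coeff i) * ((n : ℝ) + 2) ^ r.natDegree := by
    intro i hi
    rw [norm_mul, norm_pow, Complex.norm_natCast]
    have h2 : ((n : ℝ)) ^ i ≤ ((n : ℝ) + 2) ^ r.natDegree := by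
      calc ((n : ℝ)) ^ i ≤ ((n : ℝ) + 2) ^ i := by
            exact pow_le_pow_left₀ (Nat.cast_nonneg n) (by linarith) i
        _ ≤ ((n : ℝ) + 2) ^ r.natDegree := by
            apply pow_le_pow_right₀ (by linarith [Nat.cast_nonneg (α := ℝ) n])
            exact Nat.lt_succ_iff.mp (Finset.mem_range.mp hi)
    exact mul_le_mul (le_MX _ φ) h2 (by positivity) (MX_nonneg _)
  refine le_trans (Finset.sum_le_sum hterm) ?_
  rw [← Finset.sum_mul]
  have hX : (0:ℝ) ≤ ((n : ℝ) + 2) ^ r.natDegree := by positivity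
  nlinarith [hX]

lemma exists_denom (r : K[X]) : ∃ D : 𝓞 K, D ≠ 0 ∧ ∃ y : ℕ → 𝓞 K, ∀ n : ℕ,
    algebraMap (𝓞 K) K D * r.eval ((n : ℕ) : K) = algebraMap (𝓞 K) K (y n) := by
  obtain ⟨b, hb⟩ := IsLocalization.integerNormalization_map_to_map (𝓞 K)⁰ r
  refine ⟨(b : 𝓞 K), nonZeroDivisors.coe_ne_zero b,
    fun n => (IsLocalization.integerNormalization (𝓞 K)⁰ r).eval ((n : ℕ) : 𝓞 K), fun n => ?_⟩
  have h1 := congrArg (Polynomial.eval ((n : ℕ) : K)) hb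
  rw [Polynomial.eval_map, Polynomial.eval₂_at_natCast, Polynomial.eval_smul] at h1
  show algebraMap (𝓞 K) K (b : 𝓞 K) * r.eval ((n : ℕ) : K)
    = algebraMap (𝓞 K) K ((IsLocalization.integerNormalization (𝓞 K)⁰ r).eval ((n : ℕ) : 𝓞 K))
  rw [h1, Algebra.smul_def]

lemma arch_bound {r : K[X]} (hr : r ≠ 0) : ∃ A : ℝ, 0 ≤ A ∧ ∀ (φ : K →+* ℂ) (n : ℕ),
    r.eval ((n : ℕ) : K) ≠ 0 →
    |Real.log ‖φ (r.eval ((n : ℕ) : K))‖| ≤ A + A * Real.log ((n : ℝ) + 2) := by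
  classical
  obtain ⟨M, hM1, hM⟩ := poly_upper r
  obtain ⟨D, hD0, y, hy⟩ := exists_denom r
  set E : ℕ := Fintype.card (K →+* ℂ) with hE
  set cD : ℝ := |((Algebra.norm ℚ (algebraMap (𝓞 K) K D) : ℚ) : ℝ)| with hcD
  have hcD1 : 1 ≤ cD := one_le_abs_norm_coe hD0
  set d : ℕ := r.natDegree with hd
  set A : ℝ := Real.log cD + ((E : ℝ) + 1) * Real.log M + ((E : ℝ) + 1) * ((d : ℝ) + 1) with hA
  have hlogM : 0 ≤ Real.log M := Real.log_nonneg hM1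
  have hlogcD : 0 ≤ Real.log cD := Real.log_nonneg hcD1
  have hE0 : (0:ℝ) ≤ E := Nat.cast_nonneg E
  have hd0 : (0:ℝ) ≤ d := Nat.cast_nonneg d
  have hA0 : 0 ≤ A := by rw [hA]; nlinarith
  have hdA : (d : ℝ) ≤ A := by rw [hA]; nlinarith
  have hKA : Real.log cD + (E : ℝ) * Real.log M ≤ A := by rw [hA]; nlinarith
  have hEdA : (E : ℝ) * (d : ℝ) ≤ A := by rw [hA]; nlinarith
  have hMA : Real.log M ≤ A := by rw [hA]; nlinarith
  refine ⟨A, hA0, ?_⟩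
  intro φ n hne
  set x : K := r.eval ((n : ℕ) : K) with hx
  have hL0 : 0 ≤ Real.log ((n : ℝ) + 2) :=
    Real.log_nonneg (by linarith [Nat.cast_nonneg (α := ℝ) n])
  set L : ℝ := Real.log ((n : ℝ) + 2) with hLdef
  have hub : ∀ ψ : K →+* ℂ, ‖ψ x‖ ≤ M * ((n : ℝ) + 2) ^ d := fun ψ => hM ψ n
  have hpos : ∀ ψ : K →+* ℂ, 0 < ‖ψ x‖ := fun ψ => norm_emb_pos ψ hne
  have hpow1 : (1:ℝ) ≤ ((n : ℝ) + 2) ^ d :=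
    one_le_pow_real (by linarith [Nat.cast_nonneg (α := ℝ) n]) d
  have hone_le : (1:ℝ) ≤ M * ((n : ℝ) + 2) ^ d := by nlinarith
  -- lower bound coming from the product formula
  have hyn : y n ≠ 0 := by
    intro h0
    have := hy n
    rw [h0, map_zero] at this
    exact hne (by
      have hD' : algebraMap (𝓞 K) K D ≠ 0 := by
        simpa using (fun h => hD0 ((IsFractionRing.injective (𝓞 K) K) (by simpa using h)))
      rcases mul_eq_zero.mp this with h | h
      · exact absurd h hD'
      · exact h)
  have hprodx : ∏ ψ : K →+* ℂ, ‖ψ x‖ = |((Algebra.norm ℚ x : ℚ) : ℝ)| := (normProd x).symm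
  have hDx : cD * |((Algebra.norm ℚ x : ℚ) : ℝ)|
      = |((Algebra.norm ℚ (algebraMap (𝓞 K) K (y n)) : ℚ) : ℝ)| := by
    have h5 : (Algebra.norm ℚ) (algebraMap (𝓞 K) K D) * (Algebra.norm ℚ) x
        = (Algebra.norm ℚ) (algebraMap (𝓞 K) K (y n)) := by
      rw [← map_mul, hy n]
    rw [hcD, ← abs_mul]
    rw [show ((Algebra.norm ℚ (algebraMap (𝓞 K) K D) : ℚ) : ℝ) * ((Algebra.norm ℚ x : ℚ) : ℝ)
        = (((Algebra.norm ℚ (algebraMap (𝓞 K) K D) * Algebra.norm ℚ x : ℚ)) : ℝ) by push_cast; ring]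
    rw [h5]
  have hNx1 : 1 ≤ cD * |((Algebra.norm ℚ x : ℚ) : ℝ)| := by
    rw [hDx]; exact one_le_abs_norm_coe hyn
  -- single-factor lower bound
  have herase : ∏ ψ ∈ Finset.univ.erase φ, ‖ψ x‖ ≤ (M * ((n : ℝ) + 2) ^ d) ^ E := by
    calc ∏ ψ ∈ Finset.univ.erase φ, ‖ψ x‖
        ≤ ∏ _ψ ∈ Finset.univ.erase φ, (M * ((n : ℝ) + 2) ^ d) :=
          Finset.prod_le_prod (fun ψ _ => (hpos ψ).le) (fun ψ _ => hub ψ)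
      _ = (M * ((n : ℝ) + 2) ^ d) ^ (Finset.univ.erase φ).card := Finset.prod_const _
      _ ≤ (M * ((n : ℝ) + 2) ^ d) ^ E := by
          apply pow_le_pow_right₀ hone_le
          rw [hE]
          exact le_trans (Finset.card_erase_le) (le_of_eq (Finset.card_univ))
  have hsplit : ‖φ x‖ * ∏ ψ ∈ Finset.univ.erase φ, ‖ψ x‖ = ∏ ψ : K →+* ℂ, ‖ψ x‖ :=
    Finset.mul_prod_erase Finset.univ (fun ψ : K →+* ℂ => ‖ψ x‖) (Finset.mem_univ φ)
  have hlower : 1 ≤ ‖φ x‖ * (cD * (M * ((n : ℝ) + 2) ^ d) ^ E) := by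
    have h6 : |((Algebra.norm ℚ x : ℚ) : ℝ)| ≤ ‖φ x‖ * (M * ((n : ℝ) + 2) ^ d) ^ E := by
      rw [← hprodx, ← hsplit]
      have := mul_le_mul_of_nonneg_left herase (hpos φ).le
      linarith
    nlinarith [hpos φ, (hpos φ).le, hcD1]
  -- upper bound on the log
  have hlogup : Real.log ‖φ x‖ ≤ Real.log M + (d : ℝ) * L := by
    calc Real.log ‖φ x‖ ≤ Real.log (M * ((n : ℝ) + 2) ^ d) := Real.log_le_log (hpos φ) (hub φ)
      _ = Real.log M + (d : ℝ) * L := by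
          rw [Real.log_mul (by linarith) (by positivity), Real.log_pow, hLdef]
  have hlogdown : -(Real.log ‖φ x‖) ≤ Real.log cD + (E : ℝ) * (Real.log M + (d : ℝ) * L) := by
    have h7 : Real.log 1 ≤ Real.log (‖φ x‖ * (cD * (M * ((n : ℝ) + 2) ^ d) ^ E)) :=
      Real.log_le_log one_pos hlower
    rw [Real.log_one] at h7
    rw [Real.log_mul (hpos φ).ne' (by positivity), Real.log_mul (by positivity) (by positivity),
      Real.log_pow, Real.log_mul (by linarith) (by positivity), Real.log_pow] at h7
    rw [hLdef]
    linarith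
  -- combine
  clear_value A L x E d cD
  rw [abs_le]
  constructor
  · have h8 : ((E : ℝ) * (d : ℝ)) * L ≤ A * L := mul_le_mul_of_nonneg_right hEdA hL0
    linarith only [hlogdown, hKA, h8]
  · have h8 : ((d : ℝ)) * L ≤ A * L := mul_le_mul_of_nonneg_right hdA hL0
    linarith only [hlogup, hMA, h8]

lemma vadic_bound {r : K[X]} (hr : r ≠ 0) (v : IsDedekindDomain.HeightOneSpectrum (𝓞 K)) :
    ∃ A : ℝ, 0 ≤ A ∧ ∀ n : ℕ, r.eval ((n : ℕ) : K) ≠ 0 →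
    |((nuK v (r.eval ((n : ℕ) : K)) : ℤ) : ℝ)| ≤ A + A * Real.log ((n : ℝ) + 2) := by
  obtain ⟨M, hM1, hM⟩ := poly_upper r
  obtain ⟨D, hD0, y, hy⟩ := exists_denom r
  set E : ℕ := Fintype.card (K →+* ℂ) with hE
  set d : ℕ := r.natDegree with hd
  set M' : ℝ := max 1 (MX (algebraMap (𝓞 K) K D)) * M with hM'
  have hM'1 : 1 ≤ M' := by
    rw [hM']
    nlinarith [le_max_left 1 (MX (algebraMap (𝓞 K) K D))]
  set A : ℝ := |((nuK v (algebraMap (𝓞 K) K D) : ℤ) : ℝ)|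
      + 2 * (E : ℝ) * Real.log M' + 2 * (E : ℝ) * ((d : ℝ) + 1) with hA
  have hlogM' : 0 ≤ Real.log M' := Real.log_nonneg hM'1
  have hE0 : (0:ℝ) ≤ E := Nat.cast_nonneg E
  have hd0 : (0:ℝ) ≤ d := Nat.cast_nonneg d
  have hA0 : 0 ≤ A := by rw [hA]; positivity
  have hDA : |((nuK v (algebraMap (𝓞 K) K D) : ℤ) : ℝ)| ≤ A := by
    rw [hA]; nlinarith
  have hcoefA : 2 * (E : ℝ) * (d : ℝ) ≤ A := by
    rw [hA]; nlinarith [abs_nonneg ((nuK v (algebraMap (𝓞 K) K D) : ℤ) : ℝ)]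
  have hsumA : |((nuK v (algebraMap (𝓞 K) K D) : ℤ) : ℝ)| + 2 * (E : ℝ) * Real.log M' ≤ A := by
    rw [hA]; nlinarith
  refine ⟨A, hA0, ?_⟩
  intro n hne
  set x : K := r.eval ((n : ℕ) : K) with hx
  have hL0 : 0 ≤ Real.log ((n : ℝ) + 2) :=
    Real.log_nonneg (by linarith [Nat.cast_nonneg (α := ℝ) n])
  set L : ℝ := Real.log ((n : ℝ) + 2) with hLdef
  have hD' : algebraMap (𝓞 K) K D ≠ 0 := by
    simpa using (fun h => hD0 ((IsFractionRing.injective (𝓞 K) K) (by simpa using h)))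
  have hyn : y n ≠ 0 := by
    intro h0
    have h1 := hy n
    rw [h0, map_zero] at h1
    rcases mul_eq_zero.mp h1 with h | h
    · exact absurd h hD'
    · exact hne h
  -- nu decomposition
  have hnusum : nuK v (algebraMap (𝓞 K) K D) + nuK v x = nuK v (algebraMap (𝓞 K) K (y n)) := by
    rw [← nuK_mul v hD' hne, hy n]
  -- bound the numerator
  have hybound : ((nuK v (algebraMap (𝓞 K) K (y n)) : ℤ) : ℝ)
      ≤ 2 * Real.log |((Algebra.norm ℚ (algebraMap (𝓞 K) K (y n)) : ℚ) : ℝ)| :=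
    nuK_coe_le v hyn
  have hynorm : |((Algebra.norm ℚ (algebraMap (𝓞 K) K (y n)) : ℚ) : ℝ)|
      ≤ (M' * ((n : ℝ) + 2) ^ d) ^ E := by
    rw [normProd]
    have hbound : ∀ ψ : K →+* ℂ, ‖ψ (algebraMap (𝓞 K) K (y n))‖ ≤ M' * ((n : ℝ) + 2) ^ d := by
      intro ψ
      rw [← hy n, map_mul, norm_mul, hM']
      have h2 := hM ψ n
      have h3 := le_MX (algebraMap (𝓞 K) K D) ψ
      have h4 := norm_nonneg (ψ (algebraMap (𝓞 K) K D))
      have h5 := norm_nonneg (ψ x)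
      have h6 : (0:ℝ) ≤ ((n:ℝ)+2) ^ d := by positivity
      have h7 : MX (algebraMap (𝓞 K) K D) ≤ max 1 (MX (algebraMap (𝓞 K) K D)) := le_max_right _ _
      nlinarith [mul_le_mul h3 h2 h5 (le_trans h4 h3)]
    calc ∏ ψ : K →+* ℂ, ‖ψ (algebraMap (𝓞 K) K (y n))‖
        ≤ ∏ _ψ : K →+* ℂ, (M' * ((n : ℝ) + 2) ^ d) :=
          Finset.prod_le_prod (fun ψ _ => norm_nonneg _) (fun ψ _ => hbound ψ)
      _ = (M' * ((n : ℝ) + 2) ^ d) ^ E := by rw [Finset.prod_const, Finset.card_univ, hE]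
  have hpow1 : (1:ℝ) ≤ ((n : ℝ) + 2) ^ d :=
    one_le_pow_real (by linarith [Nat.cast_nonneg (α := ℝ) n]) d
  have h1le : (1:ℝ) ≤ M' * ((n : ℝ) + 2) ^ d := by nlinarith
  have hlogy : ((nuK v (algebraMap (𝓞 K) K (y n)) : ℤ) : ℝ)
      ≤ 2 * (E : ℝ) * (Real.log M' + (d : ℝ) * L) := by
    have h9 : Real.log |((Algebra.norm ℚ (algebraMap (𝓞 K) K (y n)) : ℚ) : ℝ)|
        ≤ Real.log ((M' * ((n : ℝ) + 2) ^ d) ^ E) := by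
      apply Real.log_le_log _ hynorm
      exact lt_of_lt_of_le one_pos (one_le_abs_norm_coe hyn)
    rw [Real.log_pow, Real.log_mul (by linarith) (by positivity), Real.log_pow] at h9
    rw [hLdef]
    nlinarith [hybound]
  have hyge : (0 : ℝ) ≤ ((nuK v (algebraMap (𝓞 K) K (y n)) : ℤ) : ℝ) := by
    exact_mod_cast nuK_coe_nonneg v (y n)
  -- conclude
  have hsplit : ((nuK v x : ℤ) : ℝ)
      = ((nuK v (algebraMap (𝓞 K) K (y n)) : ℤ) : ℝ)
        - ((nuK v (algebraMap (𝓞 K) K D) : ℤ) : ℝ) := by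
    have := hnusum
    push_cast [← this]
    ring
  have h11 : (2 * (E : ℝ) * (d : ℝ)) * L ≤ A * L := mul_le_mul_of_nonneg_right hcoefA hL0
  clear_value A L x E d M'
  rw [hsplit, abs_le]
  constructor
  · have h10 := le_abs_self ((nuK v (algebraMap (𝓞 K) K D) : ℤ) : ℝ)
    linarith only [h10, hDA, hyge, mul_nonneg hA0 hL0]
  · have h10 := neg_abs_le ((nuK v (algebraMap (𝓞 K) K D) : ℤ) : ℝ)
    linarith only [hlogy, h10, hsumA, h11]


variable {K : Type*} [Field K] [NumberField K]

lemma errbound (α β : K) (hα : α ≠ 0) (hβ : β ≠ 0) {p q : K[X]} (hp : p ≠ 0) (hq : q ≠ 0)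
    (i : (K →+* ℂ) ⊕ IsDedekindDomain.HeightOneSpectrum (𝓞 K)) :
    ∃ A : ℝ, 0 ≤ A ∧ ∀ n m : ℕ,
      q.eval ((m : ℕ) : K) * α ^ n = p.eval ((n : ℕ) : K) * β ^ m →
      p.eval ((n : ℕ) : K) ≠ 0 → q.eval ((m : ℕ) : K) ≠ 0 →
      |(n : ℝ) * uu α i - (m : ℝ) * uu β i|
        ≤ A * (1 + Real.log ((n : ℝ) + 2) + Real.log ((m : ℝ) + 2)) := by
  cases i with
  | inl φ =>
      obtain ⟨Ap, hAp0, hAp⟩ := arch_bound hp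
      obtain ⟨Aq, hAq0, hAq⟩ := arch_bound hq
      refine ⟨Ap + Aq, by linarith, ?_⟩
      intro n m heq hpn hqm
      have hLn : 0 ≤ Real.log ((n : ℝ) + 2) :=
        Real.log_nonneg (by linarith [Nat.cast_nonneg (α := ℝ) n])
      have hLm : 0 ≤ Real.log ((m : ℝ) + 2) :=
        Real.log_nonneg (by linarith [Nat.cast_nonneg (α := ℝ) m])
      have hqm' : ‖φ (q.eval ((m : ℕ) : K))‖ ≠ 0 := norm_emb_ne_zero φ hqm
      have hpn' : ‖φ (p.eval ((n : ℕ) : K))‖ ≠ 0 := norm_emb_ne_zero φ hpn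
      have h2 : ‖φ (q.eval ((m : ℕ) : K))‖ * ‖φ α‖ ^ n
          = ‖φ (p.eval ((n : ℕ) : K))‖ * ‖φ β‖ ^ m := by
        rw [← norm_pow, ← norm_mul, ← map_pow, ← map_mul, heq, map_mul, map_pow, norm_mul,
          norm_pow]
      have h3 := congrArg Real.log h2
      rw [Real.log_mul hqm' (pow_ne_zero _ (norm_emb_ne_zero φ hα)),
        Real.log_mul hpn' (pow_ne_zero _ (norm_emb_ne_zero φ hβ)),
        Real.log_pow, Real.log_pow] at h3
      have h4 : (n : ℝ) * uu α (Sum.inl φ) - (m : ℝ) * uu β (Sum.inl φ)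
          = Real.log ‖φ (p.eval ((n : ℕ) : K))‖ - Real.log ‖φ (q.eval ((m : ℕ) : K))‖ := by
        simp only [uu, Sum.elim_inl]
        linarith [h3]
      rw [h4]
      have h5 := hAp φ n hpn
      have h6 := hAq φ m hqm
      have h7 := abs_sub (Real.log ‖φ (p.eval ((n : ℕ) : K))‖)
        (Real.log ‖φ (q.eval ((m : ℕ) : K))‖)
      have h8 := abs_neg (Real.log ‖φ (q.eval ((m : ℕ) : K))‖)
      have h9 := abs_le.mp h5
      have h10 := abs_le.mp h6
      rw [abs_le]
      constructor
      · nlinarith [mul_nonneg hAp0 hLm, mul_nonneg hAq0 hLn]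
      · nlinarith [mul_nonneg hAp0 hLm, mul_nonneg hAq0 hLn]
  | inr v =>
      obtain ⟨Ap, hAp0, hAp⟩ := vadic_bound hp v
      obtain ⟨Aq, hAq0, hAq⟩ := vadic_bound hq v
      refine ⟨Ap + Aq, by linarith, ?_⟩
      intro n m heq hpn hqm
      have hLn : 0 ≤ Real.log ((n : ℝ) + 2) :=
        Real.log_nonneg (by linarith [Nat.cast_nonneg (α := ℝ) n])
      have hLm : 0 ≤ Real.log ((m : ℝ) + 2) :=
        Real.log_nonneg (by linarith [Nat.cast_nonneg (α := ℝ) m])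
      have h2 : nuK v (q.eval ((m : ℕ) : K)) + (n : ℤ) * nuK v α
          = nuK v (p.eval ((n : ℕ) : K)) + (m : ℤ) * nuK v β := by
        have h1 : nuK v (q.eval ((m : ℕ) : K) * α ^ n)
            = nuK v (p.eval ((n : ℕ) : K) * β ^ m) := by rw [heq]
        rwa [nuK_mul v hqm (pow_ne_zero _ hα), nuK_mul v hpn (pow_ne_zero _ hβ),
          nuK_pow, nuK_pow] at h1
      have h4 : (n : ℝ) * uu α (Sum.inr v) - (m : ℝ) * uu β (Sum.inr v)
          = ((nuK v (p.eval ((n : ℕ) : K)) : ℤ) : ℝ)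
            - ((nuK v (q.eval ((m : ℕ) : K)) : ℤ) : ℝ) := by
        simp only [uu, Sum.elim_inr]
        have h3 : ((nuK v (q.eval ((m : ℕ) : K)) : ℤ) : ℝ) + (n : ℝ) * ((nuK v α : ℤ) : ℝ)
            = ((nuK v (p.eval ((n : ℕ) : K)) : ℤ) : ℝ) + (m : ℝ) * ((nuK v β : ℤ) : ℝ) := by
          exact_mod_cast h2
        linarith [h3]
      rw [h4]
      have h5 := hAp n hpn
      have h6 := hAq m hqm
      have h9 := abs_le.mp h5
      have h10 := abs_le.mp h6
      rw [abs_le]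
      constructor
      · nlinarith [mul_nonneg hAp0 hLm, mul_nonneg hAq0 hLn]
      · nlinarith [mul_nonneg hAp0 hLm, mul_nonneg hAq0 hLn]

/-- Elementary: `t ≤ C(1 + 2 log(t+2))` bounds `t`. -/
lemma nat_log_bound (C : ℝ) (hC : 0 ≤ C) : ∃ T : ℕ, ∀ t : ℕ,
    (t : ℝ) ≤ C * (1 + 2 * Real.log ((t : ℝ) + 2)) → t ≤ T := by
  refine ⟨Nat.ceil ((C + 2 + 4 * C) ^ 2), fun t ht => ?_⟩
  have h2 : (0:ℝ) < (t : ℝ) + 2 := by positivity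
  set u : ℝ := Real.sqrt ((t : ℝ) + 2) with hu
  have hu2 : u ^ 2 = (t : ℝ) + 2 := Real.sq_sqrt h2.le
  have hu1 : 1 ≤ u := by
    have := Real.sqrt_le_sqrt (show (1:ℝ) ≤ (t : ℝ) + 2 by linarith [Nat.cast_nonneg (α := ℝ) t])
    rwa [Real.sqrt_one] at this
  have hlog : Real.log ((t : ℝ) + 2) ≤ 2 * u := by
    have h3 : Real.log ((t : ℝ) + 2) = 2 * Real.log u := by
      rw [hu, Real.log_sqrt h2.le]; ring
    have h4 := Real.log_le_sub_one_of_pos (show (0:ℝ) < u by linarith)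
    rw [h3]
    linarith
  have ht2 : (t : ℝ) ≤ C + 4 * C * u := by
    have h5 : C * (1 + 2 * Real.log ((t : ℝ) + 2)) ≤ C * (1 + 4 * u) := by
      apply mul_le_mul_of_nonneg_left _ hC
      linarith
    linarith
  have hub : u ≤ C + 2 + 4 * C := by
    nlinarith [hu2, hu1, ht2, hC]
  have htle : (t : ℝ) ≤ (C + 2 + 4 * C) ^ 2 := by nlinarith [hu2, hu1]
  exact_mod_cast Nat.cast_le.mp (le_trans (by exact_mod_cast htle) (Nat.le_ceil _))

lemma roots_nat_finite {r : K[X]} (hr : r ≠ 0) : {n : ℕ | r.eval ((n : ℕ) : K) = 0}.Finite := by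
  have h1 : {n : ℕ | r.eval ((n : ℕ) : K) = 0}
      = (fun n : ℕ => ((n : ℕ) : K)) ⁻¹' {x : K | r.IsRoot x} := rfl
  rw [h1]
  apply Set.Finite.preimage _ (Polynomial.finite_setOf_isRoot hr)
  intro a _ b _ h
  have h' : ((a : ℕ) : K) = ((b : ℕ) : K) := h
  exact_mod_cast h'

end DegenerateAux

open DegenerateAux NumberField in
/-- **Finiteness of degenerate cases.** Let `K` be a number field, `α, β ∈ K` nonzero and
multiplicatively independent, and `p, q ∈ K[X]` nonzero. Then there are only finitely many
pairs `(n, m) ∈ ℕ × ℕ` with `q(m)·αⁿ = p(n)·βᵐ`. -/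
theorem finitely_many_degenerate_pairs {K : Type*} [Field K] [NumberField K]
    (α β : K) (hα : α ≠ 0) (hβ : β ≠ 0)
    (hindep : ∀ a b : ℤ, α ^ a * β ^ b = 1 → a = 0 ∧ b = 0)
    (p q : K[X]) (hp : p ≠ 0) (hq : q ≠ 0) :
    {nm : ℕ × ℕ | q.eval (nm.2 : K) * α ^ nm.1 = p.eval (nm.1 : K) * β ^ nm.2}.Finite := by
  classical
  -- the degenerate root pairs
  have hrootfin : ({n : ℕ | p.eval ((n : ℕ) : K) = 0} ×ˢ
      {m : ℕ | q.eval ((m : ℕ) : K) = 0} : Set (ℕ × ℕ)).Finite :=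
    Set.Finite.prod (roots_nat_finite hp) (roots_nat_finite hq)
  -- the main part
  obtain ⟨i, j, hij⟩ := indep_minor α β hα hβ hindep
  obtain ⟨Ai, hAi0, hAi⟩ := errbound α β hα hβ hp hq i
  obtain ⟨Aj, hAj0, hAj⟩ := errbound α β hα hβ hp hq j
  set Δ : ℝ := uu α i * uu β j - uu α j * uu β i with hΔdef
  have hΔ0 : Δ ≠ 0 := sub_ne_zero.mpr hij
  have hΔpos : 0 < |Δ| := abs_pos.mpr hΔ0
  set W : ℝ := |uu β j| + |uu β i| + |uu α j| + |uu α i| + 1 with hW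
  have hW0 : 0 < W := by
    rw [hW]
    have := abs_nonneg (uu β j); have := abs_nonneg (uu β i)
    have := abs_nonneg (uu α j); have := abs_nonneg (uu α i)
    linarith
  set C : ℝ := (Ai + Aj) * W / |Δ| with hC
  have hC0 : 0 ≤ C := by
    apply div_nonneg _ (abs_nonneg _)
    have := hW0
    nlinarith
  obtain ⟨T, hT⟩ := nat_log_bound C hC0
  -- final inclusion
  apply Set.Finite.subset (Set.Finite.union hrootfin
    (Set.Finite.prod (Set.finite_Iic T) (Set.finite_Iic T)))
  rintro ⟨n, m⟩ hmem
  simp only [Set.mem_setOf_eq] at hmem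
  by_cases hpn : p.eval ((n : ℕ) : K) = 0
  · left
    constructor
    · exact hpn
    · have h1 : q.eval ((m : ℕ) : K) * α ^ n = 0 := by rw [hmem, hpn, zero_mul]
      rcases mul_eq_zero.mp h1 with h | h
      · exact h
      · exact absurd h (pow_ne_zero _ hα)
  · right
    have hqm : q.eval ((m : ℕ) : K) ≠ 0 := by
      intro h0
      apply hpn
      have h1 : p.eval ((n : ℕ) : K) * β ^ m = 0 := by rw [← hmem, h0, zero_mul]
      rcases mul_eq_zero.mp h1 with h | h
      · exact h
      · exact absurd h (pow_ne_zero _ hβ)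
    -- the two error bounds
    have hEi := hAi n m hmem hpn hqm
    have hEj := hAj n m hmem hpn hqm
    clear hAi hAj hmem hij hpn hqm
    set L : ℝ := 1 + Real.log ((n : ℝ) + 2) + Real.log ((m : ℝ) + 2) with hL
    have hLn : 0 ≤ Real.log ((n : ℝ) + 2) :=
      Real.log_nonneg (by linarith [Nat.cast_nonneg (α := ℝ) n])
    have hLm : 0 ≤ Real.log ((m : ℝ) + 2) :=
      Real.log_nonneg (by linarith [Nat.cast_nonneg (α := ℝ) m])
    have hL0 : 0 ≤ L := by rw [hL]; linarith
    -- extract n and m bounds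
    have habsn : (n : ℝ) * |Δ| ≤ (Ai + Aj) * W * L := by
      have hid : (n : ℝ) * Δ = ((n : ℝ) * uu α i - (m : ℝ) * uu β i) * uu β j
          - ((n : ℝ) * uu α j - (m : ℝ) * uu β j) * uu β i := by rw [hΔdef]; ring
      calc (n : ℝ) * |Δ| = |(n : ℝ) * Δ| := by
            rw [abs_mul, Nat.abs_cast]
        _ ≤ |((n : ℝ) * uu α i - (m : ℝ) * uu β i) * uu β j|
            + |((n : ℝ) * uu α j - (m : ℝ) * uu β j) * uu β i| := by
            rw [hid]; exact abs_sub _ _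
        _ ≤ (Ai * L) * |uu β j| + (Aj * L) * |uu β i| := by
            rw [abs_mul, abs_mul]
            have e1 : |(n : ℝ) * uu α i - (m : ℝ) * uu β i| ≤ Ai * L := by rw [hL]; exact hEi
            have e2 : |(n : ℝ) * uu α j - (m : ℝ) * uu β j| ≤ Aj * L := by rw [hL]; exact hEj
            have := abs_nonneg (uu β j); have := abs_nonneg (uu β i)
            have := abs_nonneg ((n : ℝ) * uu α i - (m : ℝ) * uu β i)
            have := abs_nonneg ((n : ℝ) * uu α j - (m : ℝ) * uu β j)
            nlinarith
        _ ≤ (Ai + Aj) * W * L := by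
            have h1 : |uu β j| ≤ W := by
              rw [hW]
              have g1 := abs_nonneg (uu β i)
              have g2 := abs_nonneg (uu α j)
              have g3 := abs_nonneg (uu α i)
              linarith
            have h2 : |uu β i| ≤ W := by
              rw [hW]
              have g1 := abs_nonneg (uu β j)
              have g2 := abs_nonneg (uu α j)
              have g3 := abs_nonneg (uu α i)
              linarith
            nlinarith [mul_nonneg hAi0 hL0, mul_nonneg hAj0 hL0, abs_nonneg (uu β j),
              abs_nonneg (uu β i)]
    have habsm : (m : ℝ) * |Δ| ≤ (Ai + Aj) * W * L := by
      have hid : (m : ℝ) * Δ = ((n : ℝ) * uu α i - (m : ℝ) * uu β i) * uu α j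
          - ((n : ℝ) * uu α j - (m : ℝ) * uu β j) * uu α i := by rw [hΔdef]; ring
      calc (m : ℝ) * |Δ| = |(m : ℝ) * Δ| := by
            rw [abs_mul, Nat.abs_cast]
        _ ≤ |((n : ℝ) * uu α i - (m : ℝ) * uu β i) * uu α j|
            + |((n : ℝ) * uu α j - (m : ℝ) * uu β j) * uu α i| := by
            rw [hid]; exact abs_sub _ _
        _ ≤ (Ai * L) * |uu α j| + (Aj * L) * |uu α i| := by
            rw [abs_mul, abs_mul]
            have e1 : |(n : ℝ) * uu α i - (m : ℝ) * uu β i| ≤ Ai * L := by rw [hL]; exact hEi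
            have e2 : |(n : ℝ) * uu α j - (m : ℝ) * uu β j| ≤ Aj * L := by rw [hL]; exact hEj
            have := abs_nonneg (uu α j); have := abs_nonneg (uu α i)
            have := abs_nonneg ((n : ℝ) * uu α i - (m : ℝ) * uu β i)
            have := abs_nonneg ((n : ℝ) * uu α j - (m : ℝ) * uu β j)
            nlinarith
        _ ≤ (Ai + Aj) * W * L := by
            have h1 : |uu α j| ≤ W := by
              rw [hW]
              have g1 := abs_nonneg (uu β i)
              have g2 := abs_nonneg (uu β j)
              have g3 := abs_nonneg (uu α i)
              linarith
            have h2 : |uu α i| ≤ W := by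
              rw [hW]
              have g1 := abs_nonneg (uu β j)
              have g2 := abs_nonneg (uu β i)
              have g3 := abs_nonneg (uu α j)
              linarith
            nlinarith [mul_nonneg hAi0 hL0, mul_nonneg hAj0 hL0, abs_nonneg (uu α j),
              abs_nonneg (uu α i)]
    have hnC : (n : ℝ) ≤ C * L := by
      rw [hC, div_mul_eq_mul_div, le_div_iff₀ hΔpos]
      calc (n : ℝ) * |Δ| ≤ (Ai + Aj) * W * L := habsn
        _ = (Ai + Aj) * W * L := rfl
    have hmC : (m : ℝ) ≤ C * L := by
      rw [hC, div_mul_eq_mul_div, le_div_iff₀ hΔpos]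
      exact habsm
    -- bound max n m
    have hmaxbound : ((max n m : ℕ) : ℝ)
        ≤ C * (1 + 2 * Real.log (((max n m : ℕ) : ℝ) + 2)) := by
      have hnle : ((n : ℕ) : ℝ) ≤ ((max n m : ℕ) : ℝ) := by
        exact_mod_cast le_max_left n m
      have hmle : ((m : ℕ) : ℝ) ≤ ((max n m : ℕ) : ℝ) := by
        exact_mod_cast le_max_right n m
      have hlog1 : Real.log ((n : ℝ) + 2) ≤ Real.log (((max n m : ℕ) : ℝ) + 2) :=
        Real.log_le_log (by positivity) (by linarith only [hnle])
      have hlog2 : Real.log ((m : ℝ) + 2) ≤ Real.log (((max n m : ℕ) : ℝ) + 2) :=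
        Real.log_le_log (by positivity) (by linarith only [hmle])
      have hLle : L ≤ 1 + 2 * Real.log (((max n m : ℕ) : ℝ) + 2) := by
        rw [hL]; linarith only [hlog1, hlog2, hLn, hLm]
      have hCL : C * L ≤ C * (1 + 2 * Real.log (((max n m : ℕ) : ℝ) + 2)) :=
        mul_le_mul_of_nonneg_left hLle hC0
      rcases max_cases n m with ⟨hmax, _⟩ | ⟨hmax, _⟩
      · calc ((max n m : ℕ) : ℝ) = (n : ℝ) := by rw [hmax]
          _ ≤ C * L := hnC
          _ ≤ C * (1 + 2 * Real.log (((max n m : ℕ) : ℝ) + 2)) := hCL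
      · calc ((max n m : ℕ) : ℝ) = (m : ℝ) := by rw [hmax]
          _ ≤ C * L := hmC
          _ ≤ C * (1 + 2 * Real.log (((max n m : ℕ) : ℝ) + 2)) := hCL
    have hTle := hT (max n m) hmaxbound
    constructor
    · exact le_trans (le_max_left n m) hTle
    · exact le_trans (le_max_right n m) hTle
end
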